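/- arXiv:2011.04144 — 8 statements merged into one kernel-verified Lean document; each statement's English description precedes it below -/
import Mathlib

section
/- Define f(a,b) := (a+b)·log(1+a/b) − a (natural logarithm) for b > 0 and a ≥ −b. Then for every b > 0 and every a ≥ −b, one has (1/3)·min(a²/b, |a|·log(2+|a|/b)) ≤ f(a,b) ≤ min(a²/b, |a|·log(2+|a|/b)). -/
open Real Set

/-- Padé: `2(x-1)/(x+1) ≤ log x` for `x ≥ 1`. -/
lemma pade {x : ℝ} (hx : 1 ≤ x) : 2*(x-1)/(x+1) ≤ Real.log x := by
  set F : ℝ → ℝ := fun y => Real.log y + 4*(y+1)⁻¹ with hF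
  have hd : ∀ y : ℝ, 0 < y → HasDerivAt F (y⁻¹ + 4*(-1/(y+1)^2)) y := by
    intro y hy
    have h1 : HasDerivAt (fun z : ℝ => z + 1) 1 y := (hasDerivAt_id y).add_const 1
    have h2 : HasDerivAt (fun z : ℝ => (z+1)⁻¹) (-1/(y+1)^2) y := h1.inv (by linarith)
    have := (Real.hasDerivAt_log (ne_of_gt hy)).add (h2.const_mul 4)
    exact this
  have key : MonotoneOn F (Ici 1) := by
    apply monotoneOn_of_deriv_nonneg (convex_Ici 1)
    · intro y hy
      simp only [mem_Ici] at hy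
      exact ((hd y (by linarith)).continuousAt).continuousWithinAt
    · intro y hy
      rw [interior_Ici] at hy
      simp only [mem_Ioi] at hy
      exact ((hd y (by linarith)).differentiableAt).differentiableWithinAt
    · intro y hy
      rw [interior_Ici] at hy
      simp only [mem_Ioi] at hy
      rw [(hd y (by linarith)).deriv]
      have hy0 : (0:ℝ) < y := by linarith
      have hy1 : (0:ℝ) < (y+1)^2 := by positivity
      rw [← sub_nonneg]
      have e1 : y⁻¹ + 4 * (-1 / (y + 1) ^ 2) - 0 = ((y+1)^2 - 4*y) / (y * (y+1)^2) := by
        field_simp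
        ring
      rw [e1]
      apply div_nonneg (by nlinarith) (by positivity)
  have h1 : F 1 ≤ F x := key (by simp) (by simpa using (by linarith : (1:ℝ) ≤ x)) hx
  simp only [hF, Real.log_one] at h1
  have hx1 : (0:ℝ) < x + 1 := by linarith
  have hinv : (x+1) * (x+1)⁻¹ = 1 := mul_inv_cancel₀ (ne_of_gt hx1)
  rw [div_le_iff₀ hx1]
  norm_num at h1
  nlinarith [h1, hinv]

/-- For `0 < x ≤ 1`: `(x²-1)/(2x) ≤ log x`. -/
lemma logLB {x : ℝ} (hx0 : 0 < x) (hx1 : x ≤ 1) : (x^2-1)/(2*x) ≤ Real.log x := by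
  set G : ℝ → ℝ := fun y => Real.log y - y/2 + (2*y)⁻¹ with hG
  have hd : ∀ y : ℝ, 0 < y → HasDerivAt G (y⁻¹ - 1/2 + (-2/(2*y)^2)) y := by
    intro y hy
    have h1 : HasDerivAt (fun z : ℝ => 2*z) 2 y := by
      simpa using (hasDerivAt_id y).const_mul 2
    have h2 : HasDerivAt (fun z : ℝ => (2*z)⁻¹) (-2/(2*y)^2) y := h1.inv (by positivity)
    have h3 : HasDerivAt (fun z : ℝ => z/2) (1/2) y := by
      simpa using (hasDerivAt_id y).div_const 2
    exact ((Real.hasDerivAt_log (ne_of_gt hy)).sub h3).add h2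
  have key : AntitoneOn G (Icc x 1) := by
    apply antitoneOn_of_deriv_nonpos (convex_Icc x 1)
    · intro y hy
      exact ((hd y (lt_of_lt_of_le hx0 hy.1)).continuousAt).continuousWithinAt
    · intro y hy
      rw [interior_Icc] at hy
      exact ((hd y (lt_trans hx0 hy.1)).differentiableAt).differentiableWithinAt
    · intro y hy
      rw [interior_Icc] at hy
      have hy0 : (0:ℝ) < y := lt_trans hx0 hy.1
      rw [(hd y hy0).deriv]
      have e1 : y⁻¹ - 1/2 + (-2/(2*y)^2) = -((y-1)^2) / (2*y^2) := by
        field_simp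
        ring
      rw [e1]
      apply div_nonpos_of_nonpos_of_nonneg (by nlinarith) (by positivity)
  have h1 : G 1 ≤ G x := key (mem_Icc.2 ⟨le_refl x, hx1⟩)
    (mem_Icc.2 ⟨hx1, le_refl 1⟩) hx1
  simp only [hG, Real.log_one] at h1
  norm_num at h1
  have hinv : x * x⁻¹ = 1 := mul_inv_cancel₀ (ne_of_gt hx0)
  rw [div_le_iff₀ (by positivity : (0:ℝ) < 2*x)]
  nlinarith [h1, hinv, mul_le_mul_of_nonneg_left h1 (by positivity : (0:ℝ) ≤ 2*x)]

/-- Bennett-type: `3t² ≤ (6+2t)·((1+t)log(1+t) − t)` for `t ≥ 0`. -/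
lemma bennett {t : ℝ} (ht : 0 ≤ t) : 3*t^2 ≤ (6+2*t) * ((1+t)*Real.log (1+t) - t) := by
  set H : ℝ → ℝ := fun s => (6+2*s)*((1+s)*Real.log (1+s) - s) - 3*s^2 with hHdef
  have hd : ∀ s : ℝ, 0 < 1 + s → HasDerivAt H ((8+4*s)*Real.log (1+s) - 8*s) s := by
    intro s hs
    have h1 : HasDerivAt (fun z : ℝ => 1+z) 1 s := (hasDerivAt_id s).const_add 1
    have hlog : HasDerivAt (fun z : ℝ => Real.log (1+z)) (1/(1+s)) s := by
      simpa using h1.log (ne_of_gt hs)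
    have hA : HasDerivAt (fun z : ℝ => (1+z)*Real.log (1+z) - z)
        (1*Real.log (1+s) + (1+s)*(1/(1+s)) - 1) s := (h1.mul hlog).sub (hasDerivAt_id s)
    have h2 : HasDerivAt (fun z : ℝ => 6+2*z) 2 s := by
      simpa using ((hasDerivAt_id s).const_mul 2).const_add 6
    have h3 : HasDerivAt (fun z : ℝ => 3*z^2) (3*(2*s)) s := by
      simpa using ((hasDerivAt_pow 2 s).const_mul 3)
    have := (h2.mul hA).sub h3
    refine this.congr_deriv ?_
    have : (1+s)*(1/(1+s)) = 1 := by field_simp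
    rw [this]
    ring
  have key : MonotoneOn H (Ici 0) := by
    apply monotoneOn_of_deriv_nonneg (convex_Ici 0)
    · intro s hs
      simp only [mem_Ici] at hs
      exact ((hd s (by linarith)).continuousAt).continuousWithinAt
    · intro s hs
      rw [interior_Ici] at hs
      simp only [mem_Ioi] at hs
      exact ((hd s (by linarith)).differentiableAt).differentiableWithinAt
    · intro s hs
      rw [interior_Ici] at hs
      simp only [mem_Ioi] at hs
      rw [(hd s (by linarith)).deriv]
      have hp := pade (show (1:ℝ) ≤ 1+s by linarith)
      have h2s : (0:ℝ) < 2 + s := by linarith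
      have e1 : 2*((1+s)-1)/((1+s)+1) = 2*s/(2+s) := by ring_nf
      rw [e1] at hp
      have h8 : (0:ℝ) ≤ 8+4*s := by linarith
      have := mul_le_mul_of_nonneg_left hp h8
      have e2 : (8+4*s) * (2*s/(2+s)) = 8*s := by
        field_simp
        ring
      linarith [e2 ▸ this]
  have h0 : H 0 = 0 := by simp [hHdef]
  have := key (mem_Ici.2 (le_refl 0)) (mem_Ici.2 ht) ht
  rw [h0] at this
  simp only [hHdef] at this
  linarith

/-- `s ≤ log (2+s)` for `0 ≤ s ≤ 1`. -/
lemma le_log_two_add {s : ℝ} (h0 : 0 ≤ s) (h1 : s ≤ 1) : s ≤ Real.log (2+s) := by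
  have h2s : (0:ℝ) < 2 + s := by linarith
  have hx : (0:ℝ) < (2+s)/2 := by linarith
  have hlb := Real.one_sub_inv_le_log_of_pos hx
  have hdiv : Real.log ((2+s)/2) = Real.log (2+s) - Real.log 2 := by
    rw [Real.log_div (ne_of_gt h2s) (by norm_num)]
  rw [hdiv] at hlb
  have hlog2 : (0.6931471803:ℝ) < Real.log 2 := Real.log_two_gt_d9
  have hinv : ((2+s)/2)⁻¹ = 2/(2+s) := by
    rw [inv_div]
  rw [hinv] at hlb
  have hd : 2/(2+s) ≤ 0.6931471803 + 1 - s := by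
    rw [div_le_iff₀ h2s]
    nlinarith [mul_nonneg (sub_nonneg.2 h1) h0, sq_nonneg (1-s)]
  nlinarith [hlb, hd, hlog2]

lemma core {t : ℝ} (ht : -1 ≤ t) :
    (1/3) * min (t^2) (|t| * Real.log (2+|t|)) ≤ (1+t)*Real.log (1+t) - t ∧
    (1+t)*Real.log (1+t) - t ≤ min (t^2) (|t| * Real.log (2+|t|)) := by
  rcases eq_or_lt_of_le ht with heq | hlt
  · -- t = -1
    rw [← heq]
    have h3 : (1:ℝ) < Real.log 3 := by
      rw [Real.lt_log_iff_exp_lt (by norm_num : (0:ℝ) < 3)]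
      calc Real.exp 1 < 2.7182818286 := Real.exp_one_lt_d9
        _ < 3 := by norm_num
    norm_num [Real.log_zero]
    exact ⟨by nlinarith [min_le_left (1:ℝ) (Real.log 3)], h3.le⟩
  · have h1t : (0:ℝ) < 1 + t := by linarith
    set L := Real.log (1+t) with hL
    have hLt : L ≤ t := by
      have := Real.log_le_sub_one_of_pos h1t
      simpa using this
    -- Upper bound 1 : g ≤ t²
    have hU1 : (1+t)*L - t ≤ t^2 := by nlinarith [mul_le_mul_of_nonneg_left hLt h1t.le]
    -- Upper bound 2 : g ≤ |t| log(2+|t|)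
    have hU2 : (1+t)*L - t ≤ |t| * Real.log (2+|t|) := by
      rcases le_or_gt 0 t with ht0 | ht0
      · rw [abs_of_nonneg ht0]
        have hmono : L ≤ Real.log (2+t) := Real.log_le_log h1t (by linarith)
        nlinarith [mul_le_mul_of_nonneg_left hmono ht0]
      · rw [abs_of_neg ht0]
        have hs0 : 0 ≤ -t := by linarith
        have hs1 : -t ≤ 1 := by linarith
        have := le_log_two_add hs0 hs1
        nlinarith [hU1, mul_le_mul_of_nonneg_left this hs0]
    -- Lower bound
    have hLow : (1/3) * min (t^2) (|t| * Real.log (2+|t|)) ≤ (1+t)*L - t := by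
      rcases le_or_gt t 0 with ht0 | ht0
      · -- use logLB : t²/2 ≤ g
        have hx1 : 1 + t ≤ 1 := by linarith
        have hlb := logLB h1t hx1
        rw [← hL] at hlb
        have hmul := mul_le_mul_of_nonneg_left hlb h1t.le
        have he : (1+t) * (((1+t)^2-1)/(2*(1+t))) = ((1+t)^2-1)/2 := by
          field_simp
        rw [he] at hmul
        have hg : t^2/2 ≤ (1+t)*L - t := by nlinarith [hmul]
        calc (1/3) * min (t^2) (|t| * Real.log (2+|t|)) ≤ (1/3) * t^2 := by
              apply mul_le_mul_of_nonneg_left (min_le_left _ _) (by norm_num)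
          _ ≤ (1+t)*L - t := by linarith
      · rcases le_or_gt t (3/2) with ht32 | ht32
        · -- Bennett
          have hben := bennett ht0.le
          rw [← hL] at hben
          have hgpos : 0 ≤ (1+t)*L - t := by nlinarith
          have hg : t^2/3 ≤ (1+t)*L - t := by nlinarith
          calc (1/3) * min (t^2) (|t| * Real.log (2+|t|)) ≤ (1/3) * t^2 := by
                apply mul_le_mul_of_nonneg_left (min_le_left _ _) (by norm_num)
            _ ≤ (1+t)*L - t := by linarith
        · -- t ≥ 3/2
          have h2t : (0:ℝ) < 2 + t := by linarith
          set M := Real.log (2+t) with hM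
          have hM2 : M ≤ L + 1/(1+t) := by
            have hy : (0:ℝ) < (2+t)/(1+t) := by positivity
            have := Real.log_le_sub_one_of_pos hy
            have hdiv : Real.log ((2+t)/(1+t)) = M - L := by
              rw [Real.log_div (ne_of_gt h2t) (ne_of_gt h1t)]
            rw [hdiv] at this
            have he : (2+t)/(1+t) - 1 = 1/(1+t) := by
              field_simp
              norm_num
            rw [he] at this
            linarith
          have hpade := pade (show (1:ℝ) ≤ 1+t by linarith)
          have e1 : 2*((1+t)-1)/((1+t)+1) = 2*t/(2+t) := by ring_nf
          rw [e1, ← hL] at hpade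
          -- goal: (1/3) * (t * M) ≤ (1+t)L - t   (min ≤ t*M)
          have hkey : t * M ≤ 3*((1+t)*L - t) := by
            have h1 : t * M ≤ t * L + t/(1+t) := by
              have := mul_le_mul_of_nonneg_left hM2 ht0.le
              rw [mul_add] at this
              rw [mul_one_div] at this
              linarith
            have h2 : 3*t + t/(1+t) ≤ (3+2*t) * (2*t/(2+t)) := by
              rw [← sub_nonneg]
              have e2 : (3+2*t)*(2*t/(2+t)) - (3*t + t/(1+t)) = t*(t^2-2)/((2+t)*(1+t)) := by
                field_simp
                ring
              rw [e2]
              apply div_nonneg (by nlinarith) (by positivity)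
            have h3 : (3+2*t) * (2*t/(2+t)) ≤ (3+2*t) * L :=
              mul_le_mul_of_nonneg_left hpade (by linarith)
            nlinarith [h1, h2, h3]
          have habs : |t| = t := abs_of_nonneg ht0.le
          calc (1/3) * min (t^2) (|t| * Real.log (2+|t|))
                ≤ (1/3) * (|t| * Real.log (2+|t|)) := by
                apply mul_le_mul_of_nonneg_left (min_le_right _ _) (by norm_num)
            _ = (1/3) * (t * M) := by rw [habs]
            _ ≤ (1+t)*L - t := by linarith
    exact ⟨hLow, le_min hU1 hU2⟩

/-- `f(a,b) := (a+b)·log(1+a/b) − a` (natural logarithm). -/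
noncomputable def f (a b : ℝ) : ℝ := (a + b) * Real.log (1 + a / b) - a

theorem stmt0 (a b : ℝ) (hb : 0 < b) (ha : -b ≤ a) :
    (1 / 3) * min (a ^ 2 / b) (|a| * Real.log (2 + |a| / b)) ≤ f a b ∧
      f a b ≤ min (a ^ 2 / b) (|a| * Real.log (2 + |a| / b)) := by
  have ht : (-1:ℝ) ≤ a/b := (le_div_iff₀ hb).2 (by linarith)
  obtain ⟨h1, h2⟩ := core ht
  have hmin : min (a^2/b) (|a| * Real.log (2+|a|/b))
      = b * min ((a/b)^2) (|a/b| * Real.log (2+|a/b|)) := by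
    rw [mul_min_of_nonneg _ _ hb.le]
    congr 1
    · field_simp
    · rw [abs_div, abs_of_pos hb]
      field_simp
  have hf : f a b = b * ((1+a/b)*Real.log (1+a/b) - a/b) := by
    show (a + b) * Real.log (1 + a / b) - a = _
    rw [mul_sub, ← mul_assoc]
    congr 1
    · congr 1
      field_simp
      ring
    · field_simp
  rw [hmin, hf]
  constructor
  · calc (1/3) * (b * min ((a/b)^2) (|a/b| * Real.log (2+|a/b|)))
        = b * ((1/3) * min ((a/b)^2) (|a/b| * Real.log (2+|a/b|))) := by ring
      _ ≤ b * ((1+a/b)*Real.log (1+a/b) - a/b) := mul_le_mul_of_nonneg_left h1 hb.le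
  · exact mul_le_mul_of_nonneg_left h2 hb.le
end

section
/- Let p, q ∈ (0,1] and let Δ be a real number with −p·q ≤ Δ ≤ min(p,q) − p·q. Then f(Δ, p·q) ≤ 1. -/
lemma neg_mul_log_le (m : ℝ) (hm : 0 < m) : -(m * Real.log m) ≤ (Real.exp 1)⁻¹ := by
  have he : (0:ℝ) < Real.exp 1 := Real.exp_pos 1
  have h := Real.log_le_sub_one_of_pos (show (0:ℝ) < (m * Real.exp 1)⁻¹ by positivity)
  rw [Real.log_inv, Real.log_mul (ne_of_gt hm) (ne_of_gt he), Real.log_exp] at h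
  have h2 : -Real.log m ≤ (m * Real.exp 1)⁻¹ := by linarith
  have h3 : m * (-Real.log m) ≤ m * (m * Real.exp 1)⁻¹ :=
    mul_le_mul_of_nonneg_left h2 hm.le
  have h4 : m * (m * Real.exp 1)⁻¹ = (Real.exp 1)⁻¹ := by
    field_simp
  linarith [h3, h4 ▸ h3]

theorem stmt1 (p q Δ : ℝ) (hp : p ∈ Set.Ioc (0 : ℝ) 1) (hq : q ∈ Set.Ioc (0 : ℝ) 1)
    (h1 : -(p * q) ≤ Δ) (h2 : Δ ≤ min p q - p * q) :
    f Δ (p * q) ≤ 1 := by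
  obtain ⟨hp0, hp1⟩ := hp
  obtain ⟨hq0, hq1⟩ := hq
  set m := min p q with hmdef
  have hm0 : 0 < m := lt_min hp0 hq0
  have hm1 : m ≤ 1 := le_trans (min_le_left p q) hp1
  have hb0 : 0 < p * q := mul_pos hp0 hq0
  have hb1 : p * q ≤ 1 := mul_le_one₀ hp1 hq0.le hq1
  have hbm : p * q ≤ m := by
    rcases min_cases p q with ⟨hmin, _⟩ | ⟨hmin, _⟩ <;> rw [hmdef, hmin] <;> nlinarith
  have hmb : m * m ≤ p * q :=
    mul_le_mul (min_le_left p q) (min_le_right p q) hm0.le hp0.le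
  set s := Δ + p * q with hsdef
  have hs0 : 0 ≤ s := by simp only [hsdef]; linarith
  have hsm : s ≤ m := by simp only [hsdef]; linarith
  have hrw : 1 + Δ / (p * q) = s / (p * q) := by
    field_simp
    ring
  rw [f, hrw]
  rcases eq_or_lt_of_le hs0 with h | h
  · have hs : s / (p * q) = 0 := by rw [← h]; simp
    rw [hs, Real.log_zero, mul_zero]
    have : Δ = -(p * q) := by simp only [hsdef] at h; linarith
    linarith
  · rw [Real.log_div (ne_of_gt h) (ne_of_gt hb0)]
    have hlogs : s * Real.log s ≤ 0 :=
      mul_nonpos_iff.mpr (Or.inl ⟨hs0, Real.log_nonpos hs0 (hsm.trans hm1)⟩)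
    have hlogb : Real.log (m * m) ≤ Real.log (p * q) :=
      Real.log_le_log (by positivity) hmb
    rw [Real.log_mul (ne_of_gt hm0) (ne_of_gt hm0)] at hlogb
    -- so  s * log (p*q) ≥ 2 * s * log m
    have hsl : s * (2 * Real.log m) ≤ s * Real.log (p * q) :=
      mul_le_mul_of_nonneg_left (by linarith) hs0
    by_cases hc : -1/2 ≤ Real.log m
    · -- coefficient nonpositive: -2 s log m - s ≤ 0
      have : s * (2 * Real.log m) ≥ -s := by nlinarith
      nlinarith
    · push_neg at hc
      have hcoef : s * (-2 * Real.log m - 1) ≤ m * (-2 * Real.log m - 1) := by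
        apply mul_le_mul_of_nonneg_right hsm
        nlinarith
      have hml : -(m * Real.log m) ≤ (Real.exp 1)⁻¹ := neg_mul_log_le m hm0
      have he2 : (2:ℝ) ≤ Real.exp 1 := by
        have := Real.add_one_le_exp (1:ℝ)
        linarith
      have hinv : (Real.exp 1)⁻¹ ≤ 1/2 := by
        rw [inv_le_comm₀ (Real.exp_pos 1) (by norm_num)]
        linarith
      nlinarith
end

section
/- There is a universal constant c > 0 such that for all p, q ∈ (0,1] and all real Δ with −p·q ≤ Δ ≤ min(p,q) − p·q and f(Δ, p·q) > 0, one has min(p, q, |Δ|) ≥ c · f(Δ, p·q) / log(3 / f(Δ, p·q)). -/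
lemma log_le_half (x : ℝ) (hx : 0 < x) : Real.log x ≤ x / 2 := by
  have h1 : Real.log (Real.sqrt x) ≤ Real.sqrt x - 1 :=
    Real.log_le_sub_one_of_pos (Real.sqrt_pos.mpr hx)
  have h2 : Real.log (Real.sqrt x) = Real.log x / 2 := Real.log_sqrt hx.le
  nlinarith [Real.sq_sqrt hx.le, Real.sqrt_nonneg x, sq_nonneg (Real.sqrt x - 2)]

theorem stmt2 :
    ∃ c : ℝ, 0 < c ∧
      ∀ p q Δ : ℝ, p ∈ Set.Ioc (0 : ℝ) 1 → q ∈ Set.Ioc (0 : ℝ) 1 →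
        -(p * q) ≤ Δ → Δ ≤ min p q - p * q → 0 < f Δ (p * q) →
        c * f Δ (p * q) / Real.log (3 / f Δ (p * q)) ≤ min (min p q) |Δ| := by
  refine ⟨1/2, by norm_num, ?_⟩
  intro p q Δ hp hq h1 h2 hf
  obtain ⟨hp0, hp1⟩ := hp
  obtain ⟨hq0, hq1⟩ := hq
  set b := p * q with hbdef
  have hb : 0 < b := mul_pos hp0 hq0
  have hb1 : b ≤ 1 := by nlinarith
  have hbmin : b ≤ min p q := by
    rw [le_min_iff]; constructor <;> nlinarith
  have hlog3 : (1:ℝ) ≤ Real.log 3 := by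
    rw [Real.le_log_iff_exp_le (by norm_num)]
    exact le_of_lt (lt_of_lt_of_le Real.exp_one_lt_d9 (by norm_num))
  have hfd : f Δ b = (Δ + b) * Real.log (1 + Δ / b) - Δ := rfl
  rcases lt_trichotomy Δ 0 with hneg | hzero | hpos
  · -- negative case
    have habs : |Δ| = -Δ := abs_of_neg hneg
    have hΔb : -b ≤ Δ := h1
    have hx0 : 0 ≤ 1 + Δ / b := by
      have : -1 ≤ Δ / b := by rw [le_div_iff₀ hb]; linarith
      linarith
    have hx1 : 1 + Δ / b ≤ 1 := by
      have : Δ / b ≤ 0 := div_nonpos_of_nonpos_of_nonneg hneg.le hb.le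
      linarith
    have hlognp : Real.log (1 + Δ / b) ≤ 0 := Real.log_nonpos hx0 hx1
    have hfle : f Δ b ≤ -Δ := by
      rw [hfd]; nlinarith
    have hm : |Δ| ≤ min p q := by rw [habs]; linarith [hbmin]
    have hmin_eq : min (min p q) |Δ| = |Δ| := min_eq_right hm
    have hf1 : f Δ b ≤ 1 := by linarith
    have hL3 : 1 ≤ Real.log (3 / f Δ b) := by
      rw [Real.log_div (by norm_num) hf.ne']
      have : Real.log (f Δ b) ≤ 0 := Real.log_nonpos hf.le hf1
      linarith
    rw [hmin_eq, div_le_iff₀ (by linarith : (0:ℝ) < Real.log (3 / f Δ b))]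
    nlinarith [abs_nonneg Δ]
  · exfalso
    rw [hfd, hzero] at hf
    simp at hf
  · -- positive case
    have habs : |Δ| = Δ := abs_of_pos hpos
    have hΔmin : Δ ≤ min p q := by linarith [h2, hb.le]
    have hmin_eq : min (min p q) |Δ| = |Δ| := min_eq_right (by rw [habs]; exact hΔmin)
    set t := 1 + Δ / b with htdef
    have ht1 : 1 < t := by
      have : 0 < Δ / b := div_pos hpos hb
      simp only [htdef]; linarith
    have ht0 : (0:ℝ) < t := by linarith
    have hL : 0 < Real.log t := Real.log_pos ht1
    have hbt : b * t = Δ + b := by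
      rw [htdef, mul_add, mul_one, mul_div_assoc', mul_comm b Δ, mul_div_assoc, div_self hb.ne', mul_one]; ring
    have hfa : f Δ b ≤ Δ * Real.log t := by
      have hlt : Real.log t ≤ t - 1 := Real.log_le_sub_one_of_pos ht0
      rw [hfd]
      nlinarith
    have hsq : (Δ + b)^2 ≤ b := by
      have hmm : min p q * min p q ≤ p * q :=
        mul_le_mul (min_le_left p q) (min_le_right p q) (le_min hp0.le hq0.le) hp0.le
      nlinarith [h2, hb.le]
    have hbt1 : (Δ + b) * t ≤ 1 := by
      nlinarith [hbt, hsq, hb]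
    have hft : f Δ b * t ≤ Real.log t := by
      rw [hfd]
      nlinarith [hL.le, hpos.le, ht0.le]
    have hflt : f Δ b ≤ Real.log t / t := by
      rw [le_div_iff₀ ht0]; exact hft
    have hlogf : Real.log (f Δ b) ≤ Real.log (Real.log t) - Real.log t := by
      have h3 : Real.log (f Δ b) ≤ Real.log (Real.log t / t) :=
        Real.log_le_log hf hflt
      rw [Real.log_div hL.ne' ht0.ne'] at h3
      exact h3
    have hhalf : Real.log (Real.log t) ≤ Real.log t / 2 := log_le_half _ hL
    have hL3 : 1 + Real.log t / 2 ≤ Real.log (3 / f Δ b) := by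
      rw [Real.log_div (by norm_num) hf.ne']
      linarith
    have hL3pos : 0 < Real.log (3 / f Δ b) := by linarith
    have h5 : Δ * Real.log t ≤ Δ * (2 * Real.log (3 / f Δ b)) :=
      mul_le_mul_of_nonneg_left (by linarith) hpos.le
    rw [hmin_eq, habs, div_le_iff₀ hL3pos]
    linarith [hfa, h5]
end

section
/- Let T₁ and T₂ be two spanning trees on the same finite vertex set V, with edge sets E(T₁) and E(T₂). Let E = E(T₁) \ E(T₂) and F = E(T₂) \ E(T₁). Then there exists a bijection σ : E → F such that for every e ∈ E, the edge set (E(T₁) \ {e}) ∪ {σ(e)} is again the edge set of a spanning tree on V. -/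
open SimpleGraph

section Aux
variable {V : Type*}

/-- Every vertex reaches one of the endpoints of a removed edge. -/
lemma reach_endpoint' {T : SimpleGraph V} {a b x c : V} (w : T.Walk x c) :
    (T.deleteEdges {s(a,b)}).Reachable x c ∨
      (T.deleteEdges {s(a,b)}).Reachable x a ∨ (T.deleteEdges {s(a,b)}).Reachable x b := by
  induction w with
  | nil => exact Or.inl (Reachable.refl _)
  | @cons p q r h w ih =>
    by_cases he : s(p, q) = s(a, b)
    · rcases Sym2.eq_iff.mp he with ⟨rfl, rfl⟩ | ⟨rfl, rfl⟩
      · exact Or.inr (Or.inl (Reachable.refl _))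
      · exact Or.inr (Or.inr (Reachable.refl _))
    · have hadj : (T.deleteEdges {s(a,b)}).Adj p q := by
        rw [SimpleGraph.deleteEdges_adj]
        exact ⟨h, by simpa using he⟩
      rcases ih with h' | h' | h'
      · exact Or.inl (hadj.reachable.trans h')
      · exact Or.inr (Or.inl (hadj.reachable.trans h'))
      · exact Or.inr (Or.inr (hadj.reachable.trans h'))

lemma reach_endpoint {T : SimpleGraph V} {a b x : V} (w : T.Walk x a) :
    (T.deleteEdges {s(a,b)}).Reachable x a ∨ (T.deleteEdges {s(a,b)}).Reachable x b := by
  rcases reach_endpoint' (a := a) (b := b) w with h | h | h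
  · exact Or.inl h
  · exact Or.inl h
  · exact Or.inr h

/-- If two vertices are disconnected after removing a set of edges from a tree, then some single
edge of that set already disconnects them. -/
lemma exists_cut_edge [Fintype V] {T : SimpleGraph V} (hT : T.IsTree) (S : Set (Sym2 V)) {x y : V}
    (h : ¬ (T.deleteEdges S).Reachable x y) :
    ∃ e ∈ S, ¬ (T.deleteEdges {e}).Reachable x y := by
  classical
  obtain ⟨p, hp, hup⟩ := hT.existsUnique_path x y
  have hex : ∃ e ∈ p.edges, e ∈ S := by
    by_contra hc
    push_neg at hc
    exact h ⟨p.toDeleteEdges S hc⟩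
  obtain ⟨e, hep, heS⟩ := hex
  refine ⟨e, heS, ?_⟩
  rintro ⟨q⟩
  have hsub : ∀ g ∈ q.edges, g ∈ T.edgeSet := by
    intro g hg
    have := q.edges_subset_edgeSet hg
    rw [SimpleGraph.edgeSet_deleteEdges] at this
    exact this.1
  have heq : (q.transfer T hsub).bypass = p :=
    hup _ ((q.transfer T hsub).bypass_isPath)
  have : e ∈ q.edges := by
    have := heq ▸ hep
    have h2 := (q.transfer T hsub).edges_bypass_subset this
    rwa [SimpleGraph.Walk.edges_transfer] at h2
  have := q.edges_subset_edgeSet this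
  rw [SimpleGraph.edgeSet_deleteEdges] at this
  exact this.2 rfl

/-- Swapping an edge of a tree for an edge crossing the corresponding cut gives a tree. -/
lemma swap_tree {T : SimpleGraph V} (hT : T.IsTree) {e f : Sym2 V} {u v : V}
    (he : e ∈ T.edgeSet) (hfuv : f = s(u,v)) (huv : u ≠ v)
    (hcross : ¬ (T.deleteEdges {e}).Reachable u v) :
    (SimpleGraph.fromEdgeSet ((T.edgeSet \ {e}) ∪ {f})).IsTree := by
  subst hfuv
  set D := T.deleteEdges {e} with hD
  set G := SimpleGraph.fromEdgeSet ((T.edgeSet \ {e}) ∪ {s(u,v)}) with hG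
  have hDG : D ≤ G := by
    intro x y hxy
    rw [SimpleGraph.deleteEdges_adj] at hxy
    rw [hG, SimpleGraph.fromEdgeSet_adj]
    exact ⟨Or.inl ⟨(T.mem_edgeSet).mpr hxy.1, hxy.2⟩, hxy.1.ne⟩
  have huvG : G.Adj u v := by
    rw [hG, SimpleGraph.fromEdgeSet_adj]
    exact ⟨Or.inr rfl, huv⟩
  obtain ⟨a, b, rfl⟩ : ∃ a b, e = s(a, b) := by
    induction e using Sym2.ind with
    | _ a b => exact ⟨a, b, rfl⟩
  have hTab : T.Adj a b := he
  have Bx : ∀ x : V, D.Reachable x a ∨ D.Reachable x b := fun x =>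
    reach_endpoint (hT.isConnected x a).some
  have main : ∀ a' b' : V, s(a', b') = s(a, b) → D.Reachable u a' → D.Reachable v b' →
      G.Connected := by
    intro a' b' hab' hu hv
    have Bx' : ∀ x, D.Reachable x a' ∨ D.Reachable x b' := by
      rcases Sym2.eq_iff.mp hab' with ⟨rfl, rfl⟩ | ⟨rfl, rfl⟩
      · exact Bx
      · exact fun x => (Bx x).symm
    have hne : Nonempty V := hT.isConnected.nonempty
    have key : ∀ x, G.Reachable x u := by
      intro x
      rcases Bx' x with h' | h'
      · exact ((h'.trans hu.symm).mono hDG)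
      · exact ((h'.trans hv.symm).mono hDG).trans huvG.symm.reachable
    exact ⟨fun x y => (key x).trans (key y).symm⟩
  have hconn : G.Connected := by
    rcases Bx u with hu | hu <;> rcases Bx v with hv | hv
    · exact absurd (hu.trans hv.symm) hcross
    · exact main a b rfl hu hv
    · exact main b a (Sym2.eq_swap) hu hv
    · exact absurd (hu.trans hv.symm) hcross
  have hGf : G \ SimpleGraph.fromEdgeSet {s(u,v)} ≤ D := by
    intro x y hxy
    rw [SimpleGraph.sdiff_adj] at hxy
    obtain ⟨hxy1, hxy2⟩ := hxy
    rw [hG, SimpleGraph.fromEdgeSet_adj] at hxy1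
    rw [SimpleGraph.fromEdgeSet_adj] at hxy2
    rcases hxy1.1 with hm | hm
    · rw [hD, SimpleGraph.deleteEdges_adj]
      exact ⟨hm.1, hm.2⟩
    · exact absurd ⟨hm, hxy1.2⟩ hxy2
  have hbridge : G.IsBridge s(u, v) := by
    rw [SimpleGraph.isBridge_iff]
    exact fun hr => hcross (hr.mono hGf)
  have hacyc : G.IsAcyclic := by
    intro w c hc
    have hf : s(u, v) ∉ c.edges :=
      (SimpleGraph.isBridge_iff_adj_and_forall_cycle_notMem huvG).mp hbridge c hc
    have hsub : ∀ g ∈ c.edges, g ∈ T.edgeSet := by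
      intro g hg
      have hmem := c.edges_subset_edgeSet hg
      rw [hG, SimpleGraph.edgeSet_fromEdgeSet] at hmem
      rcases hmem.1 with hm | hm
      · exact hm.1
      · exact absurd (hm ▸ hg) hf
    exact hT.IsAcyclic (c.transfer T hsub) (hc.transfer hsub)
  exact ⟨hconn, hacyc⟩

/-- If the two endpoints of a non-bridge remain connected after deleting it,
the whole graph stays preconnected. -/
lemma preconnected_deleteEdge {G : SimpleGraph V} {x y : V}
    (h : (G.deleteEdges {s(x,y)}).Reachable x y) (hG : G.Preconnected) :
    (G.deleteEdges {s(x,y)}).Preconnected := by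
  intro c d
  obtain ⟨w⟩ := hG c d
  induction w with
  | nil => exact Reachable.refl _
  | @cons p q r hadj w ih =>
    refine Reachable.trans ?_ ih
    by_cases he : s(p, q) = s(x, y)
    · rcases Sym2.eq_iff.mp he with ⟨rfl, rfl⟩ | ⟨rfl, rfl⟩
      · exact h
      · exact h.symm
    · refine Adj.reachable ?_
      rw [SimpleGraph.deleteEdges_adj]
      exact ⟨hadj, by simpa using he⟩

/-- A connected graph on `n` vertices has at least `n - 1` edges. -/
lemma connected_card_le [Fintype V] :
    ∀ (k : ℕ) (G : SimpleGraph V), G.edgeSet.ncard = k → G.Connected →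
      Fintype.card V ≤ k + 1 := by
  intro k
  induction k using Nat.strong_induction_on with
  | _ k ih =>
    intro G hk hG
    classical
    by_cases ha : G.IsAcyclic
    · have ht : G.IsTree := ⟨hG, ha⟩
      haveI : Fintype G.edgeSet := Fintype.ofFinite _
      have hcard := ht.card_edgeFinset
      have : G.edgeFinset.card = G.edgeSet.ncard := by
        rw [SimpleGraph.edgeFinset, Set.ncard_eq_toFinset_card']
      omega
    · rw [SimpleGraph.isAcyclic_iff_forall_adj_isBridge] at ha
      push_neg at ha
      obtain ⟨x, y, hadj, hnb⟩ := ha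
      rw [SimpleGraph.isBridge_iff] at hnb
      push_neg at hnb
      have hreach : (G.deleteEdges {s(x,y)}).Reachable x y := hnb
      haveI : Nonempty V := hG.nonempty
      have hconn' : (G.deleteEdges {s(x,y)}).Connected :=
        SimpleGraph.Connected.mk (preconnected_deleteEdge hreach hG.preconnected)
      have hmem : s(x, y) ∈ G.edgeSet := (G.mem_edgeSet).mpr hadj
      have hfin : G.edgeSet.Finite := Set.toFinite _
      have hkpos : 0 < k := hk ▸ (Set.ncard_pos hfin).mpr ⟨_, hmem⟩
      have hk' : (G.deleteEdges {s(x,y)}).edgeSet.ncard = k - 1 := by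
        rw [SimpleGraph.edgeSet_deleteEdges, Set.ncard_diff_singleton_of_mem hmem, hk]
      have := ih (k - 1) (by omega) _ hk' hconn'
      omega
end Aux

/-- Edge-swap pairing for spanning trees: the edges of `T₁ \ T₂` and `T₂ \ T₁`
can be put in bijection `σ` so that exchanging `e` for `σ e` in `T₁` always
yields a spanning tree. -/
theorem stmt5 {V : Type*} [Fintype V] (T₁ T₂ : SimpleGraph V)
    (h₁ : T₁.IsTree) (h₂ : T₂.IsTree) :
    ∃ σ : (T₁.edgeSet \ T₂.edgeSet : Set (Sym2 V)) ≃
          (T₂.edgeSet \ T₁.edgeSet : Set (Sym2 V)),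
      ∀ e : (T₁.edgeSet \ T₂.edgeSet : Set (Sym2 V)),
        (SimpleGraph.fromEdgeSet ((T₁.edgeSet \ {e.1}) ∪ {(σ e).1})).IsTree := by
  classical
  haveI hne : Nonempty V := h₁.isConnected.nonempty
  have hcount : ∀ (T : SimpleGraph V), T.IsTree → T.edgeSet.ncard + 1 = Fintype.card V := by
    intro T hT
    haveI : Fintype T.edgeSet := Fintype.ofFinite _
    have hc := hT.card_edgeFinset
    rwa [SimpleGraph.edgeFinset, ← Set.ncard_eq_toFinset_card'] at hc
  set t : Sym2 V → Finset (Sym2 V) := fun e =>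
    (Set.toFinite {f : Sym2 V | f ∈ T₂.edgeSet \ T₁.edgeSet ∧
      (SimpleGraph.fromEdgeSet ((T₁.edgeSet \ {e}) ∪ {f})).IsTree}).toFinset with ht
  have hall : ∀ S : Finset ↥(T₁.edgeSet \ T₂.edgeSet : Set (Sym2 V)),
      S.card ≤ (S.biUnion (fun e => t e.1)).card := by
    intro S
    set S' : Finset (Sym2 V) := S.image (fun e => e.1) with hS'
    set N : Finset (Sym2 V) := S.biUnion (fun e => t e.1) with hNdef
    have hS'card : S'.card = S.card := Finset.card_image_of_injective _ Subtype.val_injective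
    have hS'sub : ∀ g ∈ S', g ∈ T₁.edgeSet \ T₂.edgeSet := by
      intro g hg
      obtain ⟨e, _, rfl⟩ := Finset.mem_image.mp hg
      exact e.2
    set H := SimpleGraph.fromEdgeSet ((T₁.edgeSet \ ↑S') ∪ ↑N) with hH
    have hDle : T₁.deleteEdges ↑S' ≤ H := by
      intro x y hxy
      rw [SimpleGraph.deleteEdges_adj] at hxy
      rw [hH, SimpleGraph.fromEdgeSet_adj]
      exact ⟨Or.inl ⟨(T₁.mem_edgeSet).mpr hxy.1, hxy.2⟩, hxy.1.ne⟩
    have hHconn : H.Connected := by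
      refine SimpleGraph.Connected.mk ?_
      intro x y
      obtain ⟨w⟩ := h₂.isConnected x y
      induction w with
      | nil => exact Reachable.refl _
      | @cons p q r h w ih =>
        refine Reachable.trans ?_ ih
        have hg2 : s(p,q) ∈ T₂.edgeSet := (T₂.mem_edgeSet).mpr h
        by_cases hg1 : s(p,q) ∈ T₁.edgeSet
        · have hgS : s(p,q) ∉ (↑S' : Set (Sym2 V)) := fun hmem =>
            (hS'sub _ (Finset.mem_coe.mp hmem)).2 hg2
          exact ((SimpleGraph.fromEdgeSet_adj _).mpr ⟨Or.inl ⟨hg1, hgS⟩, h.ne⟩).reachable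
        · by_cases hr : (T₁.deleteEdges ↑S').Reachable p q
          · exact hr.mono hDle
          · obtain ⟨e, heS', hce⟩ := exists_cut_edge h₁ ↑S' hr
            have heS'' : e ∈ S' := Finset.mem_coe.mp heS'
            have heE := hS'sub e heS''
            have htree := swap_tree h₁ heE.1 rfl h.ne hce
            have hmemt : s(p,q) ∈ t e := by
              rw [ht, Set.Finite.mem_toFinset]
              exact ⟨⟨hg2, hg1⟩, htree⟩
            obtain ⟨e₀, he₀S, he₀⟩ := Finset.mem_image.mp heS''
            have hmemN : s(p,q) ∈ N := Finset.mem_biUnion.mpr ⟨e₀, he₀S, he₀ ▸ hmemt⟩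
            exact ((SimpleGraph.fromEdgeSet_adj _).mpr
              ⟨Or.inr (Finset.mem_coe.mpr hmemN), h.ne⟩).reachable
    have hHcard := connected_card_le H.edgeSet.ncard H rfl hHconn
    have hsub : H.edgeSet ⊆ (T₁.edgeSet \ ↑S') ∪ ↑N := by
      rw [hH, SimpleGraph.edgeSet_fromEdgeSet]
      exact Set.diff_subset
    have h1 : H.edgeSet.ncard ≤ (T₁.edgeSet \ (↑S' : Set (Sym2 V))).ncard
        + (↑N : Set (Sym2 V)).ncard :=
      le_trans (Set.ncard_le_ncard hsub (Set.toFinite _)) (Set.ncard_union_le _ _)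
    have hS'subset : (↑S' : Set (Sym2 V)) ⊆ T₁.edgeSet := fun g hg =>
      (hS'sub g (Finset.mem_coe.mp hg)).1
    have h2 : (T₁.edgeSet \ (↑S' : Set (Sym2 V))).ncard
        = T₁.edgeSet.ncard - S'.card := by
      rw [Set.ncard_diff hS'subset, Set.ncard_coe_finset]
    have h3 : (↑N : Set (Sym2 V)).ncard = N.card := Set.ncard_coe_finset _
    have h4 : S'.card ≤ T₁.edgeSet.ncard := by
      rw [← Set.ncard_coe_finset]
      exact Set.ncard_le_ncard hS'subset (Set.toFinite _)
    have h5 := hcount T₁ h₁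
    rw [← hS'card]
    omega
  obtain ⟨σ', hinj, hmem⟩ := (Finset.all_card_le_biUnion_card_iff_exists_injective
    (fun e : ↥(T₁.edgeSet \ T₂.edgeSet : Set (Sym2 V)) => t e.1)).mp hall
  have hmem' : ∀ e, σ' e ∈ T₂.edgeSet \ T₁.edgeSet ∧
      (SimpleGraph.fromEdgeSet ((T₁.edgeSet \ {e.1}) ∪ {σ' e})).IsTree := by
    intro e
    have := hmem e
    rwa [ht, Set.Finite.mem_toFinset] at this
  set σ'' : ↥(T₁.edgeSet \ T₂.edgeSet : Set (Sym2 V)) →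
      ↥(T₂.edgeSet \ T₁.edgeSet : Set (Sym2 V)) := fun e => ⟨σ' e, (hmem' e).1⟩ with hσ''
  have hinj'' : Function.Injective σ'' := fun a b h => hinj (congrArg Subtype.val h)
  haveI : Fintype ↥(T₁.edgeSet \ T₂.edgeSet : Set (Sym2 V)) := Fintype.ofFinite _
  haveI : Fintype ↥(T₂.edgeSet \ T₁.edgeSet : Set (Sym2 V)) := Fintype.ofFinite _
  have hcard : Fintype.card ↥(T₁.edgeSet \ T₂.edgeSet : Set (Sym2 V))
      = Fintype.card ↥(T₂.edgeSet \ T₁.edgeSet : Set (Sym2 V)) := by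
    rw [← Nat.card_eq_fintype_card, ← Nat.card_eq_fintype_card,
      Nat.card_coe_set_eq, Nat.card_coe_set_eq]
    have d1 : (T₁.edgeSet ∩ T₂.edgeSet).ncard + (T₁.edgeSet \ T₂.edgeSet).ncard
        = T₁.edgeSet.ncard := Set.ncard_inter_add_ncard_diff_eq_ncard _ _
    have d2 : (T₂.edgeSet ∩ T₁.edgeSet).ncard + (T₂.edgeSet \ T₁.edgeSet).ncard
        = T₂.edgeSet.ncard := Set.ncard_inter_add_ncard_diff_eq_ncard _ _
    rw [Set.inter_comm] at d2
    have c1 := hcount T₁ h₁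
    have c2 := hcount T₂ h₂
    omega
  have hbij := (Fintype.bijective_iff_injective_and_card σ'').mpr ⟨hinj'', hcard⟩
  exact ⟨Equiv.ofBijective σ'' hbij, fun e => (hmem' e).2⟩
end

section
/- Let Σ be a finite set, T a tree on vertex set {1,…,n} with a fixed root r and parent map pa, and let P, Q be probability mass functions on Σⁿ such that Q(x) > 0 for all x and Q is T-structured, i.e., Q(x) = Q_r(x_r)·∏_{v≠r} Q_{v|pa(v)}(x_v | x_{pa(v)}) where Q_{v|pa(v)}(b|a) = Q_{(pa(v),v)}(a,b)/Q_{pa(v)}(a). Then D(P‖Q) = (−H(P) + Σ_{v=1}^{n} H(P_v)) − Σ_{v≠r} I(X_v; X_{pa(v)}) + D(P_r ‖ Q_r) + Σ_{v≠r} Σ_{a∈Σ} P_{pa(v)}(a) · D( P_{v|pa(v)=a} ‖ Q_{v|pa(v)=a} ), where terms with P_{pa(v)}(a) = 0 contribute 0, and P_{v|pa(v)=a} denotes the conditional distribution of coordinate v under P given that coordinate pa(v) equals a. -/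
open scoped Classical

noncomputable section

/-- Marginal of a pmf on `Σⁿ` at coordinate `v`. -/
def marg {n : ℕ} {α : Type*} [Fintype α] (P : (Fin n → α) → ℝ) (v : Fin n) (a : α) : ℝ :=
  ∑ x : Fin n → α, if x v = a then P x else 0

/-- Marginal of a pmf on `Σⁿ` at the pair of coordinates `(u, v)`. -/
def marg2 {n : ℕ} {α : Type*} [Fintype α] (P : (Fin n → α) → ℝ) (u v : Fin n)
    (a b : α) : ℝ :=
  ∑ x : Fin n → α, if x u = a ∧ x v = b then P x else 0

/-- KL divergence `D(P‖Q)`; terms with `P x = 0` vanish automatically. -/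
def KL {β : Type*} [Fintype β] (P Q : β → ℝ) : ℝ :=
  ∑ x, P x * Real.log (P x / Q x)

/-- Shannon entropy; terms with `P x = 0` vanish automatically. -/
def ent {β : Type*} [Fintype β] (P : β → ℝ) : ℝ :=
  -∑ x, P x * Real.log (P x)

/-- Pairwise mutual information `I(X_u; X_v)` of coordinates `u, v` under `P`. -/
def miC {n : ℕ} {α : Type*} [Fintype α] (P : (Fin n → α) → ℝ) (u v : Fin n) : ℝ :=
  ∑ a, ∑ b, marg2 P u v a b *
    Real.log (marg2 P u v a b / (marg P u a * marg P v b))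

section Aux
variable {n : ℕ} {α : Type*} [Fintype α]
-- (aux lemmas as before, assume pasted)
lemma le_marg_aux (P : (Fin n → α) → ℝ) (hP0 : ∀ x, 0 ≤ P x) (v : Fin n) (x : Fin n → α) :
    P x ≤ marg P v (x v) := by
  rw [marg]
  have := Finset.single_le_sum (f := fun y : Fin n → α => if y v = x v then P y else 0)
    (fun y _ => by split <;> simp [hP0 y]) (Finset.mem_univ x)
  simpa using this

lemma le_marg2_aux (P : (Fin n → α) → ℝ) (hP0 : ∀ x, 0 ≤ P x) (u v : Fin n) (x : Fin n → α) :
    P x ≤ marg2 P u v (x u) (x v) := by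
  rw [marg2]
  have := Finset.single_le_sum (f := fun y : Fin n → α => if y u = x u ∧ y v = x v then P y else 0)
    (fun y _ => by split <;> simp [hP0 y]) (Finset.mem_univ x)
  simpa using this

lemma marg_nonneg (P : (Fin n → α) → ℝ) (hP0 : ∀ x, 0 ≤ P x) (v : Fin n) (a : α) :
    0 ≤ marg P v a :=
  Finset.sum_nonneg fun x _ => by split <;> simp [hP0 x]

lemma marg2_nonneg (P : (Fin n → α) → ℝ) (hP0 : ∀ x, 0 ≤ P x) (u v : Fin n) (a b : α) :
    0 ≤ marg2 P u v a b :=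
  Finset.sum_nonneg fun x _ => by split <;> simp [hP0 x]

lemma marg2_le_left (P : (Fin n → α) → ℝ) (hP0 : ∀ x, 0 ≤ P x) (u v : Fin n) (a b : α) :
    marg2 P u v a b ≤ marg P u a := by
  refine Finset.sum_le_sum fun x _ => ?_
  split_ifs with h1 h2 <;> simp_all [hP0 x]

lemma marg2_le_right (P : (Fin n → α) → ℝ) (hP0 : ∀ x, 0 ≤ P x) (u v : Fin n) (a b : α) :
    marg2 P u v a b ≤ marg P v b := by
  refine Finset.sum_le_sum fun x _ => ?_
  split_ifs with h1 h2 <;> simp_all [hP0 x]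

lemma marg2_swap (P : (Fin n → α) → ℝ) (u v : Fin n) (a b : α) :
    marg2 P u v a b = marg2 P v u b a :=
  Finset.sum_congr rfl fun x _ => if_congr and_comm rfl rfl

lemma marg_pos (Q : (Fin n → α) → ℝ) (hQ : ∀ x, 0 < Q x) (v : Fin n) (a : α) :
    0 < marg Q v a := by
  have h := le_marg_aux Q (fun x => (hQ x).le) v (fun _ => a)
  exact lt_of_lt_of_le (hQ _) h

lemma marg2_pos (Q : (Fin n → α) → ℝ) (hQ : ∀ x, 0 < Q x) (u v : Fin n) (huv : u ≠ v)
    (a b : α) : 0 < marg2 Q u v a b := by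
  set x : Fin n → α := Function.update (fun _ => a) v b with hx
  have hxu : x u = a := by simp [hx, Function.update_of_ne huv]
  have hxv : x v = b := by simp [hx]
  have h := le_marg2_aux Q (fun y => (hQ y).le) u v x
  rw [hxu, hxv] at h
  exact lt_of_lt_of_le (hQ x) h

lemma Emarg (P : (Fin n → α) → ℝ) (v : Fin n) (f : α → ℝ) :
    ∑ a, marg P v a * f a = ∑ x, P x * f (x v) := by
  simp only [marg, Finset.sum_mul]
  rw [Finset.sum_comm]
  refine Finset.sum_congr rfl fun x _ => ?_
  simp [ite_mul, Finset.sum_ite_eq]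

lemma Emarg2 (P : (Fin n → α) → ℝ) (u v : Fin n) (f : α → α → ℝ) :
    ∑ a, ∑ b, marg2 P u v a b * f a b = ∑ x, P x * f (x u) (x v) := by
  simp only [marg2, Finset.sum_mul]
  have h1 : ∀ a : α, (∑ b, ∑ x : Fin n → α, (if x u = a ∧ x v = b then P x else 0) * f a b)
      = ∑ x : Fin n → α, ∑ b, (if x u = a ∧ x v = b then P x else 0) * f a b :=
    fun a => Finset.sum_comm
  simp only [h1]
  rw [Finset.sum_comm]
  refine Finset.sum_congr rfl fun x _ => ?_
  simp [ite_and, ite_mul, Finset.sum_ite_eq]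
end Aux

/-- Decomposition of `D(P‖Q)` for a `T`-structured positive pmf `Q` (Lemma 2.4). -/
theorem stmt6 {n : ℕ} {α : Type*} [Fintype α]
    (T : SimpleGraph (Fin n)) (hT : T.IsTree) (r : Fin n) (pa : Fin n → Fin n)
    (hE : T.edgeSet = {e | ∃ v, v ≠ r ∧ e = s(pa v, v)})
    (P Q : (Fin n → α) → ℝ)
    (hP0 : ∀ x, 0 ≤ P x) (hP1 : ∑ x, P x = 1)
    (hQpos : ∀ x, 0 < Q x) (hQ1 : ∑ x, Q x = 1)
    (hQstruct : ∀ x, Q x = marg Q r (x r) *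
      ∏ v ∈ Finset.univ.filter (fun v => v ≠ r),
        marg2 Q (pa v) v (x (pa v)) (x v) / marg Q (pa v) (x (pa v))) :
    KL P Q =
      (-(ent P) + ∑ v, ent (fun a => marg P v a))
        - (∑ v ∈ Finset.univ.filter (fun v => v ≠ r), miC P v (pa v))
        + KL (fun a => marg P r a) (fun a => marg Q r a)
        + ∑ v ∈ Finset.univ.filter (fun v => v ≠ r), ∑ a : α,
            marg P (pa v) a *
              KL (fun b => marg2 P (pa v) v a b / marg P (pa v) a)
                 (fun b => marg2 Q (pa v) v a b / marg Q (pa v) a) := by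
  classical
  have hQm : ∀ (v : Fin n) (a : α), 0 < marg Q v a := fun v a => marg_pos Q hQpos v a
  have hpane : ∀ v : Fin n, v ≠ r → pa v ≠ v := by
    intro v hv
    have hmem : s(pa v, v) ∈ T.edgeSet := by rw [hE]; exact ⟨v, hv, rfl⟩
    exact (T.mem_edgeSet.mp hmem).ne
  have hQm2 : ∀ v : Fin n, v ≠ r → ∀ a b, 0 < marg2 Q (pa v) v a b :=
    fun v hv a b => marg2_pos Q hQpos _ _ (hpane v hv) a b
  set σ := Finset.univ.filter (fun v : Fin n => v ≠ r) with hσ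
  -- piece 1: entropy
  have hent : -(ent P) = ∑ x, P x * Real.log (P x) := by simp [ent]
  -- piece 2: sum of marginal entropies
  have h2 : ∑ v, ent (fun a => marg P v a)
      = -∑ x, P x * ∑ v, Real.log (marg P v (x v)) := by
    have e1 : ∀ v : Fin n, ent (fun a => marg P v a)
        = -∑ x, P x * Real.log (marg P v (x v)) := by
      intro v
      rw [ent]
      congr 1
      exact Emarg P v (fun a => Real.log (marg P v a))
    calc ∑ v, ent (fun a => marg P v a)
        = ∑ v : Fin n, -∑ x, P x * Real.log (marg P v (x v)) := by simp only [e1]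
      _ = -∑ v : Fin n, ∑ x, P x * Real.log (marg P v (x v)) := by
          rw [Finset.sum_neg_distrib]
      _ = -∑ x, ∑ v : Fin n, P x * Real.log (marg P v (x v)) := by rw [Finset.sum_comm]
      _ = -∑ x, P x * ∑ v, Real.log (marg P v (x v)) := by
          congr 1
          exact Finset.sum_congr rfl fun x _ => (Finset.mul_sum _ _ _).symm
  -- piece 3: mutual information sum
  have h3 : (∑ v ∈ σ, miC P v (pa v))
      = ∑ x, P x * ∑ v ∈ σ, (Real.log (marg2 P v (pa v) (x v) (x (pa v)))
          - Real.log (marg P v (x v)) - Real.log (marg P (pa v) (x (pa v)))) := by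
    have e1 : ∀ v ∈ σ, miC P v (pa v)
        = ∑ x, P x * (Real.log (marg2 P v (pa v) (x v) (x (pa v)))
            - Real.log (marg P v (x v)) - Real.log (marg P (pa v) (x (pa v)))) := by
      intro v _
      rw [miC, ← Emarg2 P v (pa v) (fun a b => Real.log (marg2 P v (pa v) a b)
        - Real.log (marg P v a) - Real.log (marg P (pa v) b))]
      refine Finset.sum_congr rfl fun a _ => Finset.sum_congr rfl fun b _ => ?_
      rcases (marg2_nonneg P hP0 v (pa v) a b).eq_or_lt with h | h
      · rw [← h]; ring
      · have h1 : 0 < marg P v a := lt_of_lt_of_le h (marg2_le_left P hP0 _ _ _ _)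
        have hb : 0 < marg P (pa v) b := lt_of_lt_of_le h (marg2_le_right P hP0 _ _ _ _)
        rw [Real.log_div h.ne' (by positivity), Real.log_mul h1.ne' hb.ne']
        ring
    rw [Finset.sum_congr rfl e1, Finset.sum_comm]
    refine Finset.sum_congr rfl fun x _ => ?_
    rw [Finset.mul_sum]
  -- piece 4: root KL
  have h4 : KL (fun a => marg P r a) (fun a => marg Q r a)
      = ∑ x, P x * (Real.log (marg P r (x r)) - Real.log (marg Q r (x r))) := by
    rw [KL, ← Emarg P r (fun a => Real.log (marg P r a) - Real.log (marg Q r a))]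
    refine Finset.sum_congr rfl fun a _ => ?_
    rcases (marg_nonneg P hP0 r a).eq_or_lt with h | h
    · rw [← h]; ring
    · rw [Real.log_div h.ne' (hQm r a).ne']
  -- piece 5: conditional KLs
  have h5 : (∑ v ∈ σ, ∑ a : α, marg P (pa v) a *
        KL (fun b => marg2 P (pa v) v a b / marg P (pa v) a)
           (fun b => marg2 Q (pa v) v a b / marg Q (pa v) a))
      = ∑ x, P x * ∑ v ∈ σ, (Real.log (marg2 P v (pa v) (x v) (x (pa v)))
          - Real.log (marg P (pa v) (x (pa v)))
          - Real.log (marg2 Q (pa v) v (x (pa v)) (x v))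
          + Real.log (marg Q (pa v) (x (pa v)))) := by
    have e1 : ∀ v ∈ σ, (∑ a : α, marg P (pa v) a *
          KL (fun b => marg2 P (pa v) v a b / marg P (pa v) a)
             (fun b => marg2 Q (pa v) v a b / marg Q (pa v) a))
        = ∑ x, P x * (Real.log (marg2 P v (pa v) (x v) (x (pa v)))
            - Real.log (marg P (pa v) (x (pa v)))
            - Real.log (marg2 Q (pa v) v (x (pa v)) (x v))
            + Real.log (marg Q (pa v) (x (pa v)))) := by
      intro v hv
      have hvr : v ≠ r := by simpa [hσ] using hv
      rw [← Emarg2 P (pa v) v (fun a b => Real.log (marg2 P v (pa v) b a)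
        - Real.log (marg P (pa v) a) - Real.log (marg2 Q (pa v) v a b)
        + Real.log (marg Q (pa v) a))]
      simp only [KL, Finset.mul_sum]
      refine Finset.sum_congr rfl fun a _ => Finset.sum_congr rfl fun b _ => ?_
      rw [marg2_swap P v (pa v) b a]
      rcases (marg2_nonneg P hP0 (pa v) v a b).eq_or_lt with h | h
      · rw [← h]; simp
      · have h1 : 0 < marg P (pa v) a := lt_of_lt_of_le h (marg2_le_left P hP0 _ _ _ _)
        have hq2 := hQm2 v hvr a b
        have hq1 := hQm (pa v) a
        rw [Real.log_div (by positivity) (by positivity),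
          Real.log_div h.ne' h1.ne', Real.log_div hq2.ne' hq1.ne']
        have hc : marg P (pa v) a * (marg2 P (pa v) v a b / marg P (pa v) a)
            = marg2 P (pa v) v a b := by field_simp
        rw [← mul_assoc, hc]
        ring
    rw [Finset.sum_congr rfl e1, Finset.sum_comm]
    refine Finset.sum_congr rfl fun x _ => ?_
    rw [Finset.mul_sum]
  rw [KL, hent, h2, h3, h4, h5]
  rw [← Finset.sum_neg_distrib, ← Finset.sum_add_distrib, ← Finset.sum_sub_distrib,
    ← Finset.sum_add_distrib, ← Finset.sum_add_distrib]
  refine Finset.sum_congr rfl fun x _ => ?_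
  rcases (hP0 x).eq_or_lt with hx | hx
  · simp [← hx]
  · -- log of Q structure
    have hQprodpos : ∀ v ∈ σ, (0:ℝ) < marg2 Q (pa v) v (x (pa v)) (x v) / marg Q (pa v) (x (pa v)) := by
      intro v hv
      have hvr : v ≠ r := by simpa [hσ] using hv
      exact div_pos (hQm2 v hvr _ _) (hQm _ _)
    have hlogQ : Real.log (Q x) = Real.log (marg Q r (x r))
        + ∑ v ∈ σ, (Real.log (marg2 Q (pa v) v (x (pa v)) (x v))
            - Real.log (marg Q (pa v) (x (pa v)))) := by
      rw [hQstruct x, Real.log_mul (hQm r (x r)).ne'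
        (Finset.prod_pos hQprodpos).ne', Real.log_prod (fun v hv => (hQprodpos v hv).ne')]
      congr 1
      refine Finset.sum_congr rfl fun v hv => ?_
      have hvr : v ≠ r := by simpa [hσ] using hv
      exact Real.log_div (hQm2 v hvr _ _).ne' (hQm _ _).ne'
    have hsplit : ∑ v, Real.log (marg P v (x v))
        = Real.log (marg P r (x r)) + ∑ v ∈ σ, Real.log (marg P v (x v)) := by
      rw [hσ, Finset.filter_ne']
      exact (Finset.add_sum_erase _ _ (Finset.mem_univ r)).symm
    rw [Real.log_div hx.ne' (hQpos x).ne', hlogQ, hsplit]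
    simp only [Finset.sum_sub_distrib, Finset.sum_add_distrib]
    ring


end
end

section
/- There is a universal constant c > 0 such that the following holds. Let Σ be a finite set, P a probability mass function on Σ×Σ, fix (x,y) ∈ Σ×Σ, and let P̂ be the empirical distribution of N > 1 i.i.d. samples from P. Then for every δ ∈ (0,1), with probability at least 1−3δ all of the following hold simultaneously: |P̂_X(x) − P_X(x)| ≤ c(√(P_X(x)·log(2/δ)/N) + log(2/δ)/N); |P̂_Y(y) − P_Y(y)| ≤ c(√(P_Y(y)·log(2/δ)/N) + log(2/δ)/N); |P̂(x,y) − P(x,y)| ≤ c(√(P(x,y)·log(2/δ)/N) + log(2/δ)/N); |P̂_X(x)P̂_Y(y) − P_X(x)P_Y(y)| ≤ c(√(P_X(x)P_Y(y)·log(2/δ)/N) + (P_X(x)+P_Y(y))·log(2/δ)/N + log²(2/δ)/N²); and |Δ̂_{xy} − Δ_{xy}| ≤ c(√(|Δ_{xy}|·log(2/δ)/N) + √(P_X(x)P_Y(y)·log(2/δ)/N) + log(2/δ)/N + log²(2/δ)/N²). -/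
open scoped Classical

noncomputable section

open Finset

/-- Probability of an event under a (finitely supported) density `p`. -/
def prob {Ω : Type*} [Fintype Ω] (p : Ω → ℝ) (E : Set Ω) : ℝ :=
  ∑ ω, if ω ∈ E then p ω else 0

/-- Empirical probability of `a` among the `N` samples `s`. -/
def emp {α : Type*} (N : ℕ) (s : Fin N → α) (a : α) : ℝ :=
  ((Finset.univ.filter (fun j => s j = a)).card : ℝ) / N



/-- sum over functions of products -/
lemma sum_prod_fn {Ω : Type*} [Fintype Ω] (N : ℕ) (g : Ω → ℝ) :
    ∑ s : Fin N → Ω, ∏ j, g (s j) = (∑ ω, g ω) ^ N := by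
  have : (∑ ω, g ω) ^ N = ∏ _j : Fin N, ∑ ω ∈ (Finset.univ : Finset Ω), g ω := by
    simp [Finset.prod_const]
  rw [this, Finset.prod_univ_sum, Fintype.piFinset_univ]

lemma exp_le_one_add (x : ℝ) (hx : |x| ≤ 1) : Real.exp x ≤ 1 + x + x ^ 2 := by
  have h := Real.exp_bound hx (n := 3) (by norm_num)
  have h2 : |x| ^ 3 ≤ x ^ 2 := by
    have : |x| ^ 3 ≤ |x| ^ 2 := pow_le_pow_of_le_one (abs_nonneg x) hx (by norm_num)
    simpa [sq_abs] using this
  have h3 : ∑ m ∈ Finset.range 3, x ^ m / (Nat.factorial m : ℝ) = 1 + x + x ^ 2 / 2 := by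
    simp [Finset.sum_range_succ, Nat.factorial]
  rw [h3] at h
  have h4 := (abs_le.mp h).2
  have h5 : ((Nat.succ 3 : ℕ) : ℝ) / ((Nat.factorial 3 : ℕ) * (3:ℕ)) = 2/9 := by
    norm_num [Nat.factorial]
  rw [h5] at h4
  nlinarith [sq_nonneg x]

section Core
variable {Ω : Type*} [Fintype Ω]

def cntR (A : Finset Ω) {N : ℕ} (s : Fin N → Ω) : ℝ := ∑ j, if s j ∈ A then (1:ℝ) else 0

lemma prob_nonneg (p : Ω → ℝ) (hp : ∀ ω, 0 ≤ p ω) (E : Set Ω) : 0 ≤ prob p E := by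
  apply Finset.sum_nonneg; intro ω _; split
  · exact hp ω
  · exact le_rfl

lemma prob_mono (p : Ω → ℝ) (hp : ∀ ω, 0 ≤ p ω) {E F : Set Ω} (h : E ⊆ F) :
    prob p E ≤ prob p F := by
  apply Finset.sum_le_sum; intro ω _
  by_cases hE : ω ∈ E
  · simp [hE, h hE]
  · by_cases hF : ω ∈ F <;> simp [hE, hF, hp ω]

lemma prob_union_le (p : Ω → ℝ) (hp : ∀ ω, 0 ≤ p ω) (E F : Set Ω) :
    prob p (E ∪ F) ≤ prob p E + prob p F := by
  rw [prob, prob, prob, ← Finset.sum_add_distrib]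
  apply Finset.sum_le_sum; intro ω _
  by_cases hE : ω ∈ E <;> by_cases hF : ω ∈ F <;>
    simp [hE, hF, Set.mem_union, hp ω, add_nonneg (hp ω) (hp ω)]

lemma prob_compl (p : Ω → ℝ) (hp1 : ∑ ω, p ω = 1) (E : Set Ω) :
    prob p E = 1 - prob p Eᶜ := by
  rw [prob, prob, ← hp1, ← Finset.sum_sub_distrib]
  apply Finset.sum_congr rfl; intro ω _
  by_cases hE : ω ∈ E <;> simp [hE]

lemma mgf_eq (p : Ω → ℝ) (A : Finset Ω) (N : ℕ) (l : ℝ) :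
    ∑ s : Fin N → Ω, (∏ j, p (s j)) * Real.exp (l * cntR A s)
      = (∑ ω, p ω * Real.exp (l * (if ω ∈ A then (1:ℝ) else 0))) ^ N := by
  have key : ∀ s : Fin N → Ω, (∏ j, p (s j)) * Real.exp (l * cntR A s)
      = ∏ j, (fun ω => p ω * Real.exp (l * (if ω ∈ A then (1:ℝ) else 0))) (s j) := by
    intro s
    simp only
    rw [Finset.prod_mul_distrib, cntR, Finset.mul_sum, Real.exp_sum]
  simp_rw [key]
  exact sum_prod_fn N (fun ω => p ω * Real.exp (l * (if ω ∈ A then (1:ℝ) else 0)))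

lemma inner_sum_eq (p : Ω → ℝ) (hp1 : ∑ ω, p ω = 1) (A : Finset Ω) (l : ℝ) :
    (∑ ω, p ω * Real.exp (l * (if ω ∈ A then (1:ℝ) else 0)))
      = 1 + (∑ ω ∈ A, p ω) * (Real.exp l - 1) := by
  have : ∀ ω : Ω, p ω * Real.exp (l * (if ω ∈ A then (1:ℝ) else 0))
      = p ω + (if ω ∈ A then p ω * (Real.exp l - 1) else 0) := by
    intro ω; split <;> simp <;> ring
  simp_rw [this]
  rw [Finset.sum_add_distrib, hp1, Finset.sum_ite_mem, Finset.univ_inter, ← Finset.sum_mul]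


lemma tail_bound (p : Ω → ℝ) (hp : ∀ ω, 0 ≤ p ω) (hp1 : ∑ ω, p ω = 1)
    (A : Finset Ω) (N : ℕ) (l r : ℝ) (hl : |l| ≤ 1) :
    prob (fun s : Fin N → Ω => ∏ j, p (s j))
      {s | r ≤ l * (cntR A s - N * (∑ ω ∈ A, p ω))}
      ≤ Real.exp (N * (∑ ω ∈ A, p ω) * l ^ 2 - r) := by
  set q := ∑ ω ∈ A, p ω with hq
  have hq0 : 0 ≤ q := Finset.sum_nonneg (fun ω _ => hp ω)
  have hw : ∀ s : Fin N → Ω, 0 ≤ ∏ j, p (s j) :=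
    fun s => Finset.prod_nonneg (fun j _ => hp (s j))
  have step1 : prob (fun s : Fin N → Ω => ∏ j, p (s j))
      {s | r ≤ l * (cntR A s - N * q)}
      ≤ ∑ s : Fin N → Ω, ((∏ j, p (s j)) * Real.exp (l * cntR A s)) * Real.exp (-(l * (N * q)) - r) := by
    apply Finset.sum_le_sum; intro s _
    by_cases hs : r ≤ l * (cntR A s - N * q)
    · simp only [Set.mem_setOf_eq, hs, if_true]
      rw [mul_assoc, ← Real.exp_add]
      have h1 : (0:ℝ) ≤ l * cntR A s + (-(l * (N * q)) - r) := by nlinarith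
      calc (∏ j, p (s j)) = (∏ j, p (s j)) * 1 := (mul_one _).symm
        _ ≤ _ := mul_le_mul_of_nonneg_left (Real.one_le_exp h1) (hw s)
    · simp only [Set.mem_setOf_eq, hs, if_false]
      exact mul_nonneg (mul_nonneg (hw s) (Real.exp_pos _).le) (Real.exp_pos _).le
  have step2 : ∑ s : Fin N → Ω, ((∏ j, p (s j)) * Real.exp (l * cntR A s)) * Real.exp (-(l * (N * q)) - r)
      = (1 + q * (Real.exp l - 1)) ^ N * Real.exp (-(l * (N * q)) - r) := by
    rw [← Finset.sum_mul, mgf_eq, inner_sum_eq p hp1]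
  have hbase : 0 ≤ 1 + q * (Real.exp l - 1) := by
    have hq1 : q ≤ 1 := by
      rw [← hp1]
      exact Finset.sum_le_sum_of_subset_of_nonneg (Finset.subset_univ A) (fun ω _ _ => hp ω)
    nlinarith [Real.exp_pos l]
  have step3 : (1 + q * (Real.exp l - 1)) ^ N ≤ Real.exp (N * (q * (Real.exp l - 1))) := by
    rw [Real.exp_nat_mul]
    apply pow_le_pow_left₀ hbase
    linarith [Real.add_one_le_exp (q * (Real.exp l - 1))]
  have step4 : N * (q * (Real.exp l - 1)) + (-(l * (N * q)) - r) ≤ N * q * l ^ 2 - r := by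
    have he : Real.exp l ≤ 1 + l + l ^ 2 := exp_le_one_add l hl
    have hN0 : (0:ℝ) ≤ (N:ℝ) := Nat.cast_nonneg N
    nlinarith [mul_nonneg hN0 hq0]
  calc prob (fun s : Fin N → Ω => ∏ j, p (s j)) {s | r ≤ l * (cntR A s - N * q)}
      ≤ (1 + q * (Real.exp l - 1)) ^ N * Real.exp (-(l * (N * q)) - r) := step1.trans step2.le
    _ ≤ Real.exp (N * (q * (Real.exp l - 1))) * Real.exp (-(l * (N * q)) - r) :=
        mul_le_mul_of_nonneg_right step3 (Real.exp_pos _).le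
    _ = Real.exp (N * (q * (Real.exp l - 1)) + (-(l * (N * q)) - r)) := (Real.exp_add _ _).symm
    _ ≤ Real.exp (N * q * l ^ 2 - r) := Real.exp_le_exp.mpr step4

lemma good_lambda (Q L t : ℝ) (hQ : 0 ≤ Q) (hL : 0 < L)
    (ht : t = 2 * Real.sqrt (Q * L) + 2 * L) :
    ∃ l : ℝ, 0 ≤ l ∧ l ≤ 1 ∧ Q * l ^ 2 - l * t ≤ -L := by
  have hsq : 0 ≤ Real.sqrt (Q * L) := Real.sqrt_nonneg _
  have ht0 : 0 < t := by rw [ht]; positivity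
  have ht2 : 4 * (Q * L) ≤ t ^ 2 := by
    have h1 : Real.sqrt (Q * L) ^ 2 = Q * L := Real.sq_sqrt (by positivity)
    nlinarith
  by_cases hc : 2 * Q ≤ t
  · refine ⟨1, zero_le_one, le_refl 1, ?_⟩
    have hLt : 2 * L ≤ t := by rw [ht]; linarith
    nlinarith
  · push_neg at hc
    have hQpos : 0 < Q := by nlinarith
    refine ⟨t / (2 * Q), by positivity,
      (div_le_one (by positivity : (0:ℝ) < 2*Q)).mpr hc.le, ?_⟩
    have heq : Q * (t / (2 * Q)) ^ 2 - t / (2 * Q) * t = -(t ^ 2 / (4 * Q)) := by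
      field_simp; ring
    rw [heq, neg_le_neg_iff, le_div_iff₀ (by positivity : (0:ℝ) < 4*Q)]
    linarith

lemma conc (p : Ω → ℝ) (hp : ∀ ω, 0 ≤ p ω) (hp1 : ∑ ω, p ω = 1)
    (A : Finset Ω) (N : ℕ) (L : ℝ) (hL : 0 < L) :
    prob (fun s : Fin N → Ω => ∏ j, p (s j))
      {s | ¬ |cntR A s - N * (∑ ω ∈ A, p ω)| ≤ 2 * Real.sqrt (N * (∑ ω ∈ A, p ω) * L) + 2 * L}
      ≤ 2 * Real.exp (-L) := by
  set q := ∑ ω ∈ A, p ω with hq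
  have hq0 : 0 ≤ q := Finset.sum_nonneg (fun ω _ => hp ω)
  set t : ℝ := 2 * Real.sqrt (N * q * L) + 2 * L with htdef
  obtain ⟨l, hl0, hl1, hopt⟩ := good_lambda ((N:ℝ) * q) L t (by positivity) hL htdef
  have habs : |l| ≤ 1 := abs_le.mpr ⟨by linarith, hl1⟩
  have hsub : {s : Fin N → Ω | ¬ |cntR A s - N * q| ≤ t}
      ⊆ {s | l * t ≤ l * (cntR A s - N * q)} ∪ {s | l * t ≤ (-l) * (cntR A s - N * q)} := by
    intro s hs
    simp only [Set.mem_setOf_eq, not_le] at hs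
    rcases lt_abs.mp hs with h1 | h1
    · left; exact mul_le_mul_of_nonneg_left h1.le hl0
    · right
      simp only [Set.mem_setOf_eq, neg_mul]
      nlinarith
  calc prob (fun s : Fin N → Ω => ∏ j, p (s j)) {s | ¬ |cntR A s - N * q| ≤ t}
      ≤ prob (fun s : Fin N → Ω => ∏ j, p (s j))
        ({s | l * t ≤ l * (cntR A s - N * q)} ∪ {s | l * t ≤ (-l) * (cntR A s - N * q)}) :=
        prob_mono _ (fun s => Finset.prod_nonneg (fun j _ => hp (s j))) hsub
    _ ≤ prob (fun s : Fin N → Ω => ∏ j, p (s j)) {s | l * t ≤ l * (cntR A s - N * q)}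
        + prob (fun s : Fin N → Ω => ∏ j, p (s j)) {s | l * t ≤ (-l) * (cntR A s - N * q)} :=
        prob_union_le _ (fun s => Finset.prod_nonneg (fun j _ => hp (s j))) _ _
    _ ≤ Real.exp (N * q * l ^ 2 - l * t) + Real.exp (N * q * (-l) ^ 2 - l * t) := by
        apply add_le_add
        · exact tail_bound p hp hp1 A N l (l * t) habs
        · exact tail_bound p hp hp1 A N (-l) (l * t) (by rwa [abs_neg])
    _ ≤ 2 * Real.exp (-L) := by
        have h1 : N * q * l ^ 2 - l * t ≤ -L := hopt
        have h2 : N * q * (-l) ^ 2 - l * t ≤ -L := by rw [neg_pow]; simpa using hopt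
        have := Real.exp_le_exp.mpr h1
        have := Real.exp_le_exp.mpr h2
        linarith

end Core

section Bridge
variable {α : Type} [Fintype α]

lemma emp_eq_cntR (N : ℕ) (s : Fin N → α × α) (x y : α) :
    emp N s (x, y) = cntR {(x, y)} s / N := by
  unfold emp cntR
  congr 1
  push_cast [Finset.card_filter]
  simp

lemma sum_emp_fst (N : ℕ) (s : Fin N → α × α) (x : α) :
    ∑ y', emp N s (x, y') = cntR (Finset.univ.filter fun z : α × α => z.1 = x) s / N := by
  unfold emp cntR
  rw [← Finset.sum_div]
  congr 1
  push_cast [Finset.card_filter]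
  rw [Finset.sum_comm]
  apply Finset.sum_congr rfl
  intro j _
  simp only [Finset.mem_filter, Finset.mem_univ, true_and]
  by_cases h : (s j).1 = x
  · have : ∀ y', (s j = (x, y')) ↔ ((s j).2 = y') := by
      intro y'; rw [Prod.ext_iff]; simp [h]
    simp_rw [this]
    simp [h, Finset.sum_ite_eq univ (s j).2 (fun _ => (1:ℝ))]
  · have : ∀ y', ¬ (s j = (x, y')) := by
      intro y' hc; exact h (by rw [hc])
    simp [this, h]

lemma sum_emp_snd (N : ℕ) (s : Fin N → α × α) (y : α) :
    ∑ x', emp N s (x', y) = cntR (Finset.univ.filter fun z : α × α => z.2 = y) s / N := by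
  unfold emp cntR
  rw [← Finset.sum_div]
  congr 1
  push_cast [Finset.card_filter]
  rw [Finset.sum_comm]
  apply Finset.sum_congr rfl
  intro j _
  simp only [Finset.mem_filter, Finset.mem_univ, true_and]
  by_cases h : (s j).2 = y
  · have : ∀ x', (s j = (x', y)) ↔ ((s j).1 = x') := by
      intro x'; rw [Prod.ext_iff]; simp [h]
    simp_rw [this]
    simp [h, Finset.sum_ite_eq univ (s j).1 (fun _ => (1:ℝ))]
  · have : ∀ x', ¬ (s j = (x', y)) := by
      intro x' hc; exact h (by rw [hc])
    simp [this, h]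

lemma sum_P_fst (P : α × α → ℝ) (x : α) :
    ∑ z ∈ Finset.univ.filter (fun z : α × α => z.1 = x), P z = ∑ y', P (x, y') := by
  rw [Finset.sum_filter, Fintype.sum_prod_type, Finset.sum_comm]
  apply Finset.sum_congr rfl
  intro y' _
  simp

lemma sum_P_snd (P : α × α → ℝ) (y : α) :
    ∑ z ∈ Finset.univ.filter (fun z : α × α => z.2 = y), P z = ∑ x', P (x', y) := by
  rw [Finset.sum_filter, Fintype.sum_prod_type]
  simp

lemma sum_P_single (P : α × α → ℝ) (x y : α) :
    ∑ z ∈ ({(x,y)} : Finset (α × α)), P z = P (x, y) := Finset.sum_singleton _ _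

end Bridge

set_option maxHeartbeats 1000000 in
lemma det45 (sa sb sp sd sK : ℝ) (ah bh ph : ℝ)
    (ha0 : 0 ≤ sa) (hb0 : 0 ≤ sb) (hp0 : 0 ≤ sp) (hd0 : 0 ≤ sd) (hK0 : 0 ≤ sK)
    (ha1 : sa ≤ 1) (hb1 : sb ≤ 1)
    (hd : sp ^ 2 ≤ sd ^ 2 + sa ^ 2 * sb ^ 2)
    (h1 : |ah - sa ^ 2| ≤ 2 * (sa * sK + sK ^ 2))
    (h2 : |bh - sb ^ 2| ≤ 2 * (sb * sK + sK ^ 2))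
    (h3 : |ph - sp ^ 2| ≤ 2 * (sp * sK + sK ^ 2)) :
    |ah * bh - sa ^ 2 * sb ^ 2| ≤
        1000 * (sa * sb * sK + (sa ^ 2 + sb ^ 2) * sK ^ 2 + sK ^ 4) ∧
    |(ph - ah * bh) - (sp ^ 2 - sa ^ 2 * sb ^ 2)| ≤
        1000 * (sd * sK + sa * sb * sK + sK ^ 2 + sK ^ 4) := by
  have hbh : |bh| ≤ sb ^ 2 + 2 * (sb * sK + sK ^ 2) := by
    calc |bh| = |sb ^ 2 + (bh - sb ^ 2)| := by congr 1; ring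
      _ ≤ |sb ^ 2| + |bh - sb ^ 2| := abs_add_le _ _
      _ ≤ sb ^ 2 + 2 * (sb * sK + sK ^ 2) := by
          rw [abs_of_nonneg (by positivity)]; linarith
  have e1 : |ah * bh - sa ^ 2 * sb ^ 2| ≤ |ah - sa ^ 2| * |bh| + sa ^ 2 * |bh - sb ^ 2| := by
    calc |ah * bh - sa ^ 2 * sb ^ 2| = |(ah - sa ^ 2) * bh + sa ^ 2 * (bh - sb ^ 2)| := by
          congr 1; ring
      _ ≤ |(ah - sa ^ 2) * bh| + |sa ^ 2 * (bh - sb ^ 2)| := abs_add_le _ _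
      _ = |ah - sa ^ 2| * |bh| + sa ^ 2 * |bh - sb ^ 2| := by
          rw [abs_mul, abs_mul, abs_of_nonneg (by positivity : (0:ℝ) ≤ sa ^ 2)]
  have e2 : |ah - sa ^ 2| * |bh| ≤ (2 * (sa * sK + sK ^ 2)) * (sb ^ 2 + 2 * (sb * sK + sK ^ 2)) :=
    mul_le_mul h1 hbh (abs_nonneg _) (by positivity)
  have e3 : sa ^ 2 * |bh - sb ^ 2| ≤ sa ^ 2 * (2 * (sb * sK + sK ^ 2)) :=
    mul_le_mul_of_nonneg_left h2 (by positivity)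
  have t1 : 0 ≤ sa * sb * sK * (1 - sb) := by
    apply mul_nonneg (by positivity); linarith
  have t2 : 0 ≤ sa * sb * sK * (1 - sa) := by
    apply mul_nonneg (by positivity); linarith
  have t3 : 0 ≤ sK ^ 2 * (sa - sb) ^ 2 := by positivity
  have t4 : 0 ≤ (sa * sK - sK ^ 2) ^ 2 := sq_nonneg _
  have t5 : 0 ≤ (sb * sK - sK ^ 2) ^ 2 := sq_nonneg _
  have t6 : 0 ≤ sa * sb * sK := by positivity
  have t7 : 0 ≤ (sa ^ 2 + sb ^ 2) * sK ^ 2 := by positivity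
  have t8 : 0 ≤ sK ^ 4 := by positivity
  have part4' : |ah * bh - sa ^ 2 * sb ^ 2| ≤
      4 * (sa * sb * sK) + 6 * ((sa ^ 2 + sb ^ 2) * sK ^ 2) + 8 * sK ^ 4 := by
    nlinarith [e1, e2, e3]
  have part4 : |ah * bh - sa ^ 2 * sb ^ 2| ≤
      1000 * (sa * sb * sK + (sa ^ 2 + sb ^ 2) * sK ^ 2 + sK ^ 4) := by linarith
  refine ⟨part4, ?_⟩
  have hsp : sp ≤ sd + sa * sb := by
    nlinarith [mul_nonneg ha0 hb0, sq_nonneg (sp + sd + sa * sb)]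
  have e5 : |(ph - ah * bh) - (sp ^ 2 - sa ^ 2 * sb ^ 2)|
      ≤ |ph - sp ^ 2| + |ah * bh - sa ^ 2 * sb ^ 2| := by
    calc |(ph - ah * bh) - (sp ^ 2 - sa ^ 2 * sb ^ 2)|
        = |(ph - sp ^ 2) + -(ah * bh - sa ^ 2 * sb ^ 2)| := by congr 1; ring
      _ ≤ |ph - sp ^ 2| + |-(ah * bh - sa ^ 2 * sb ^ 2)| := abs_add_le _ _
      _ = |ph - sp ^ 2| + |ah * bh - sa ^ 2 * sb ^ 2| := by rw [abs_neg]
  have hsq : (sa ^ 2 + sb ^ 2) * sK ^ 2 ≤ 2 * sK ^ 2 := by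
    have h2 : sa ^ 2 + sb ^ 2 ≤ 2 := by nlinarith
    have := mul_le_mul_of_nonneg_right h2 (sq_nonneg sK)
    linarith
  have hspK : sp * sK ≤ sd * sK + sa * sb * sK := by
    have := mul_le_mul_of_nonneg_right hsp hK0
    linarith [this]
  have hdK : 0 ≤ sd * sK := by positivity
  have hK2 : 0 ≤ sK ^ 2 := by positivity
  linarith [e5, h3, part4']


lemma scale (n : ℝ) (hn : 0 < n) (C q L : ℝ) (hq : 0 ≤ q) (hL : 0 ≤ L)
    (h : |C - n * q| ≤ 2 * Real.sqrt (n * q * L) + 2 * L) :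
    |C / n - q| ≤ 2 * (Real.sqrt q * Real.sqrt (L / n) + (Real.sqrt (L / n)) ^ 2) := by
  have key : Real.sqrt (n * q * L) = Real.sqrt q * Real.sqrt (L / n) * n := by
    rw [show n * q * L = (Real.sqrt q * Real.sqrt (L / n) * n) ^ 2 by
      rw [mul_pow, mul_pow, Real.sq_sqrt hq, Real.sq_sqrt (by positivity : 0 ≤ L / n)]
      field_simp]
    exact Real.sqrt_sq (by positivity)
  have hLn : (Real.sqrt (L / n)) ^ 2 = L / n := Real.sq_sqrt (by positivity)
  have : |C / n - q| = |C - n * q| / n := by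
    rw [show C / n - q = (C - n * q) / n by field_simp, abs_div, abs_of_pos hn]
  rw [this, div_le_iff₀ hn]
  calc |C - n * q| ≤ 2 * Real.sqrt (n * q * L) + 2 * L := h
    _ = 2 * (Real.sqrt q * Real.sqrt (L / n) + (Real.sqrt (L / n)) ^ 2) * n := by
      rw [key, hLn]; field_simp

/-- Concentration of the empirical joint, marginals, product of marginals and `Δ̂`
around their population values (Claim 4.4). -/
theorem stmt8 :
    ∃ c : ℝ, 0 < c ∧
      ∀ (α : Type) [Fintype α], ∀ P : α × α → ℝ,
        (∀ z, 0 ≤ P z) → (∑ z, P z = 1) →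
        ∀ (x y : α) (N : ℕ), 1 < N →
        ∀ δ : ℝ, δ ∈ Set.Ioo (0 : ℝ) 1 →
        1 - 3 * δ ≤
          prob (fun s : Fin N → α × α => ∏ j, P (s j))
            {s |
              |(∑ y', emp N s (x, y')) - ∑ y', P (x, y')| ≤
                c * (Real.sqrt ((∑ y', P (x, y')) * Real.log (2 / δ) / N)
                  + Real.log (2 / δ) / N) ∧
              |(∑ x', emp N s (x', y)) - ∑ x', P (x', y)| ≤
                c * (Real.sqrt ((∑ x', P (x', y)) * Real.log (2 / δ) / N)
                  + Real.log (2 / δ) / N) ∧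
              |emp N s (x, y) - P (x, y)| ≤
                c * (Real.sqrt (P (x, y) * Real.log (2 / δ) / N)
                  + Real.log (2 / δ) / N) ∧
              |(∑ y', emp N s (x, y')) * (∑ x', emp N s (x', y)) -
                  (∑ y', P (x, y')) * (∑ x', P (x', y))| ≤
                c * (Real.sqrt ((∑ y', P (x, y')) * (∑ x', P (x', y)) *
                      Real.log (2 / δ) / N)
                  + ((∑ y', P (x, y')) + (∑ x', P (x', y))) * Real.log (2 / δ) / N
                  + (Real.log (2 / δ)) ^ 2 / (N : ℝ) ^ 2) ∧
              |(emp N s (x, y) - (∑ y', emp N s (x, y')) * (∑ x', emp N s (x', y))) -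
                  (P (x, y) - (∑ y', P (x, y')) * (∑ x', P (x', y)))| ≤
                c * (Real.sqrt (|P (x, y) - (∑ y', P (x, y')) * (∑ x', P (x', y))| *
                      Real.log (2 / δ) / N)
                  + Real.sqrt ((∑ y', P (x, y')) * (∑ x', P (x', y)) *
                      Real.log (2 / δ) / N)
                  + Real.log (2 / δ) / N
                  + (Real.log (2 / δ)) ^ 2 / (N : ℝ) ^ 2)} := by
  refine ⟨1000, by norm_num, ?_⟩
  intro α _ P hP hP1 x y N hN δ hδ
  obtain ⟨hδ0, hδ1⟩ := hδ
  set L : ℝ := Real.log (2 / δ) with hLdef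
  have hL : 0 < L := Real.log_pos (by rw [lt_div_iff₀ hδ0]; linarith)
  have hNpos : (0:ℝ) < (N : ℝ) := by
    have : 0 < N := by omega
    exact_mod_cast this
  set A1 : Finset (α × α) := Finset.univ.filter (fun z : α × α => z.1 = x) with hA1
  set A2 : Finset (α × α) := Finset.univ.filter (fun z : α × α => z.2 = y) with hA2
  set A3 : Finset (α × α) := {(x, y)} with hA3
  set q1 : ℝ := ∑ z ∈ A1, P z with hq1def
  set q2 : ℝ := ∑ z ∈ A2, P z with hq2def
  set q3 : ℝ := ∑ z ∈ A3, P z with hq3def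
  have hq1P : q1 = ∑ y', P (x, y') := sum_P_fst P x
  have hq2P : q2 = ∑ x', P (x', y) := sum_P_snd P y
  have hq3P : q3 = P (x, y) := sum_P_single P x y
  have hq10 : 0 ≤ q1 := Finset.sum_nonneg fun z _ => hP z
  have hq20 : 0 ≤ q2 := Finset.sum_nonneg fun z _ => hP z
  have hq30 : 0 ≤ q3 := Finset.sum_nonneg fun z _ => hP z
  have hle1 : ∀ A : Finset (α × α), (∑ z ∈ A, P z) ≤ 1 := fun A => by
    rw [← hP1]
    exact Finset.sum_le_sum_of_subset_of_nonneg (Finset.subset_univ A) fun z _ _ => hP z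
  have hq11 : q1 ≤ 1 := hle1 A1
  have hq21 : q2 ≤ 1 := hle1 A2
  have hq31 : q3 ≤ 1 := hle1 A3
  set W : (Fin N → α × α) → ℝ := fun s => ∏ j, P (s j) with hW
  have hWnn : ∀ s, 0 ≤ W s := fun s => Finset.prod_nonneg fun j _ => hP (s j)
  have hW1 : ∑ s : Fin N → α × α, W s = 1 := by
    rw [hW, sum_prod_fn, hP1, one_pow]
  set G1 : Set (Fin N → α × α) :=
    {s | |cntR A1 s - N * q1| ≤ 2 * Real.sqrt (N * q1 * L) + 2 * L} with hG1
  set G2 : Set (Fin N → α × α) :=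
    {s | |cntR A2 s - N * q2| ≤ 2 * Real.sqrt (N * q2 * L) + 2 * L} with hG2
  set G3 : Set (Fin N → α × α) :=
    {s | |cntR A3 s - N * q3| ≤ 2 * Real.sqrt (N * q3 * L) + 2 * L} with hG3
  -- deterministic part: good events imply the target event
  have hsub : G1 ∩ (G2 ∩ G3) ⊆
      {s : Fin N → α × α |
              |(∑ y', emp N s (x, y')) - ∑ y', P (x, y')| ≤
                1000 * (Real.sqrt ((∑ y', P (x, y')) * Real.log (2 / δ) / N)
                  + Real.log (2 / δ) / N) ∧
              |(∑ x', emp N s (x', y)) - ∑ x', P (x', y)| ≤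
                1000 * (Real.sqrt ((∑ x', P (x', y)) * Real.log (2 / δ) / N)
                  + Real.log (2 / δ) / N) ∧
              |emp N s (x, y) - P (x, y)| ≤
                1000 * (Real.sqrt (P (x, y) * Real.log (2 / δ) / N)
                  + Real.log (2 / δ) / N) ∧
              |(∑ y', emp N s (x, y')) * (∑ x', emp N s (x', y)) -
                  (∑ y', P (x, y')) * (∑ x', P (x', y))| ≤
                1000 * (Real.sqrt ((∑ y', P (x, y')) * (∑ x', P (x', y)) *
                      Real.log (2 / δ) / N)
                  + ((∑ y', P (x, y')) + (∑ x', P (x', y))) * Real.log (2 / δ) / N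
                  + (Real.log (2 / δ)) ^ 2 / (N : ℝ) ^ 2) ∧
              |(emp N s (x, y) - (∑ y', emp N s (x, y')) * (∑ x', emp N s (x', y))) -
                  (P (x, y) - (∑ y', P (x, y')) * (∑ x', P (x', y)))| ≤
                1000 * (Real.sqrt (|P (x, y) - (∑ y', P (x, y')) * (∑ x', P (x', y))| *
                      Real.log (2 / δ) / N)
                  + Real.sqrt ((∑ y', P (x, y')) * (∑ x', P (x', y)) *
                      Real.log (2 / δ) / N)
                  + Real.log (2 / δ) / N
                  + (Real.log (2 / δ)) ^ 2 / (N : ℝ) ^ 2)} := by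
    rintro s ⟨g1, g2, g3⟩
    simp only [hG1, Set.mem_setOf_eq] at g1
    simp only [hG2, Set.mem_setOf_eq] at g2
    simp only [hG3, Set.mem_setOf_eq] at g3
    set sa : ℝ := Real.sqrt q1 with hsa
    set sb : ℝ := Real.sqrt q2 with hsb
    set sp : ℝ := Real.sqrt q3 with hsp
    set sd : ℝ := Real.sqrt |q3 - q1 * q2| with hsd
    set sK : ℝ := Real.sqrt (L / N) with hsK
    have hsa2 : sa ^ 2 = q1 := Real.sq_sqrt hq10
    have hsb2 : sb ^ 2 = q2 := Real.sq_sqrt hq20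
    have hsp2 : sp ^ 2 = q3 := Real.sq_sqrt hq30
    have hsd2 : sd ^ 2 = |q3 - q1 * q2| := Real.sq_sqrt (abs_nonneg _)
    have hsK2 : sK ^ 2 = L / N := Real.sq_sqrt (by positivity)
    have hsa0 : 0 ≤ sa := Real.sqrt_nonneg _
    have hsb0 : 0 ≤ sb := Real.sqrt_nonneg _
    have hsp0 : 0 ≤ sp := Real.sqrt_nonneg _
    have hsd0 : 0 ≤ sd := Real.sqrt_nonneg _
    have hsK0 : 0 ≤ sK := Real.sqrt_nonneg _
    have hsa1 : sa ≤ 1 := Real.sqrt_le_one.mpr hq11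
    have hsb1 : sb ≤ 1 := Real.sqrt_le_one.mpr hq21
    have e1 : ∑ y', emp N s (x, y') = cntR A1 s / N := sum_emp_fst N s x
    have e2 : ∑ x', emp N s (x', y) = cntR A2 s / N := sum_emp_snd N s y
    have e3 : emp N s (x, y) = cntR A3 s / N := emp_eq_cntR N s x y
    have h1 : |cntR A1 s / N - q1| ≤ 2 * (sa * sK + sK ^ 2) :=
      scale N hNpos _ q1 L hq10 hL.le g1
    have h2 : |cntR A2 s / N - q2| ≤ 2 * (sb * sK + sK ^ 2) :=
      scale N hNpos _ q2 L hq20 hL.le g2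
    have h3 : |cntR A3 s / N - q3| ≤ 2 * (sp * sK + sK ^ 2) :=
      scale N hNpos _ q3 L hq30 hL.le g3
    have hd : sp ^ 2 ≤ sd ^ 2 + sa ^ 2 * sb ^ 2 := by
      rw [hsa2, hsb2, hsp2, hsd2]
      have := le_abs_self (q3 - q1 * q2)
      linarith
    rw [← hsa2] at h1
    rw [← hsb2] at h2
    rw [← hsp2] at h3
    obtain ⟨p4, p5⟩ := det45 sa sb sp sd sK (cntR A1 s / N) (cntR A2 s / N) (cntR A3 s / N)
      hsa0 hsb0 hsp0 hsd0 hsK0 hsa1 hsb1 hd h1 h2 h3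
    -- rewrite target sqrt expressions
    have r1 : Real.sqrt (q1 * L / N) = sa * sK := by
      rw [show q1 * L / N = (sa * sK) ^ 2 by
        rw [mul_pow, hsa2, hsK2]; field_simp]
      exact Real.sqrt_sq (by positivity)
    have r2 : Real.sqrt (q2 * L / N) = sb * sK := by
      rw [show q2 * L / N = (sb * sK) ^ 2 by
        rw [mul_pow, hsb2, hsK2]; field_simp]
      exact Real.sqrt_sq (by positivity)
    have r3 : Real.sqrt (q3 * L / N) = sp * sK := by
      rw [show q3 * L / N = (sp * sK) ^ 2 by
        rw [mul_pow, hsp2, hsK2]; field_simp]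
      exact Real.sqrt_sq (by positivity)
    have r4 : Real.sqrt (q1 * q2 * L / N) = sa * sb * sK := by
      rw [show q1 * q2 * L / N = (sa * sb * sK) ^ 2 by
        rw [mul_pow, mul_pow, hsa2, hsb2, hsK2]; field_simp]
      exact Real.sqrt_sq (by positivity)
    have r5 : Real.sqrt (|q3 - q1 * q2| * L / N) = sd * sK := by
      rw [show |q3 - q1 * q2| * L / N = (sd * sK) ^ 2 by
        rw [mul_pow, hsd2, hsK2]; field_simp]
      exact Real.sqrt_sq (by positivity)
    have rK : L / N = sK ^ 2 := hsK2.symm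
    have rK2 : L ^ 2 / (N : ℝ) ^ 2 = sK ^ 4 := by
      rw [show (sK:ℝ) ^ 4 = (sK ^ 2) ^ 2 by ring, hsK2, div_pow]
    have hpos1 : 0 ≤ sa * sK + sK ^ 2 := by positivity
    have hpos2 : 0 ≤ sb * sK + sK ^ 2 := by positivity
    have hpos3 : 0 ≤ sp * sK + sK ^ 2 := by positivity
    simp only [Set.mem_setOf_eq]
    rw [e1, e2, e3, ← hq1P, ← hq2P, ← hq3P]
    refine ⟨?_, ?_, ?_, ?_, ?_⟩
    · rw [r1, rK, ← hsa2]; linarith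
    · rw [r2, rK, ← hsb2]; linarith
    · rw [r3, rK, ← hsp2]; linarith
    · have hmid : (q1 + q2) * L / N = (q1 + q2) * sK ^ 2 := by
        rw [mul_div_assoc, hsK2]
      rw [r4, hmid, rK2, ← hsa2, ← hsb2]
      exact p4
    · rw [r5, r4, rK, rK2, ← hsa2, ← hsb2, ← hsp2]
      exact p5
  -- probabilistic part
  have hbad : ∀ (A : Finset (α × α)),
      prob W {s : Fin N → α × α |
        |cntR A s - N * (∑ z ∈ A, P z)| ≤ 2 * Real.sqrt (N * (∑ z ∈ A, P z) * L) + 2 * L}ᶜ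
        ≤ δ := by
    intro A
    have h := conc P hP hP1 A N L hL
    have heq : {s : Fin N → α × α |
        |cntR A s - N * (∑ z ∈ A, P z)| ≤ 2 * Real.sqrt (N * (∑ z ∈ A, P z) * L) + 2 * L}ᶜ
        = {s : Fin N → α × α |
        ¬ |cntR A s - N * (∑ z ∈ A, P z)| ≤ 2 * Real.sqrt (N * (∑ z ∈ A, P z) * L) + 2 * L} := by
      ext s; simp
    rw [heq]
    refine h.trans ?_
    rw [hLdef, Real.exp_neg, Real.exp_log (by positivity)]
    rw [show ((2:ℝ) / δ)⁻¹ = δ / 2 by field_simp]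
    linarith
  have hcompl : (G1 ∩ (G2 ∩ G3))ᶜ = G1ᶜ ∪ (G2ᶜ ∪ G3ᶜ) := by
    rw [Set.compl_inter, Set.compl_inter]
  have hProbG : 1 - 3 * δ ≤ prob W (G1 ∩ (G2 ∩ G3)) := by
    rw [prob_compl W hW1]
    have : prob W (G1 ∩ (G2 ∩ G3))ᶜ ≤ 3 * δ := by
      rw [hcompl]
      calc prob W (G1ᶜ ∪ (G2ᶜ ∪ G3ᶜ)) ≤ prob W G1ᶜ + prob W (G2ᶜ ∪ G3ᶜ) :=
            prob_union_le W hWnn _ _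
        _ ≤ prob W G1ᶜ + (prob W G2ᶜ + prob W G3ᶜ) := by
            linarith [prob_union_le W hWnn G2ᶜ G3ᶜ]
        _ ≤ δ + (δ + δ) := by
            have b1 := hbad A1
            have b2 := hbad A2
            have b3 := hbad A3
            rw [← hq1def] at b1
            rw [← hq2def] at b2
            rw [← hq3def] at b3
            exact add_le_add b1 (add_le_add b2 b3)
        _ = 3 * δ := by ring
    linarith
  calc 1 - 3 * δ ≤ prob W (G1 ∩ (G2 ∩ G3)) := hProbG
    _ ≤ _ := prob_mono W hWnn hsub

end
end

section
/- There exists a universal constant C₃ > 0 such that the following holds. Let Σ be a finite set and P a pmf on Σ×Σ that is a product distribution (P(x,y) = P_X(x)·P_Y(y) for all x,y). Let P̂ be the empirical distribution of N > 1 i.i.d. samples from P. Then for every δ ∈ (0,1), with probability at least 1−δ, the empirical mutual information satisfies I(X̂;Ŷ) ≤ C₃·|Σ|²·(log N / N)·log(|Σ|/δ). -/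
open scoped Classical

noncomputable section

/-- Mutual information of a pmf `Q` on `α × α`; terms with `Q z = 0` vanish. -/
def miP {α : Type*} [Fintype α] (Q : α × α → ℝ) : ℝ :=
  ∑ z : α × α, Q z * Real.log (Q z / ((∑ y, Q (z.1, y)) * (∑ x, Q (x, z.2))))

namespace Stmt12Aux

variable {β : Type*} [Fintype β]

lemma emp_nonneg {N : ℕ} (s : Fin N → β) (a : β) : 0 ≤ emp N s a := by
  unfold emp; positivity

lemma sum_cnt {N : ℕ} (s : Fin N → β) :
    ∑ a, ((Finset.univ.filter fun j => s j = a).card : ℝ) = N := by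
  norm_cast
  rw [← Finset.card_eq_sum_card_fiberwise (f := s) (fun i _ => Finset.mem_univ (s i))]
  simp

lemma sum_emp {N : ℕ} (hN : 0 < N) (s : Fin N → β) : ∑ a, emp N s a = 1 := by
  unfold emp
  rw [← Finset.sum_div, sum_cnt, div_self (by positivity)]

lemma prod_count {N : ℕ} (s : Fin N → β) (f : β → ℝ) :
    ∏ j, f (s j) = ∏ a, f a ^ (Finset.univ.filter fun j => s j = a).card := by
  refine (Finset.prod_comp f s).trans (Finset.prod_subset (Finset.subset_univ _) fun a _ ha => ?_)
  have : (Finset.univ.filter fun j => s j = a) = ∅ := by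
    ext j
    simp only [Finset.mem_filter, Finset.mem_univ, true_and, Finset.notMem_empty, iff_false]
    intro h
    exact ha (Finset.mem_image.mpr ⟨j, Finset.mem_univ j, h⟩)
  rw [this]
  simp

lemma kl_nonneg {q p : β → ℝ} (hq0 : ∀ x, 0 ≤ q x) (hp0 : ∀ x, 0 ≤ p x)
    (hq1 : ∑ x, q x = 1) (hp1 : ∑ x, p x ≤ 1) (hpos : ∀ x, 0 < q x → 0 < p x) :
    0 ≤ ∑ x, q x * Real.log (q x / p x) := by
  have key : ∀ x, q x - p x ≤ q x * Real.log (q x / p x) := by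
    intro x
    rcases eq_or_lt_of_le (hq0 x) with h | h
    · rw [← h]; simpa using hp0 x
    · have hpx := hpos x h
      have hlog : Real.log (p x / q x) ≤ p x / q x - 1 :=
        Real.log_le_sub_one_of_pos (by positivity)
      have hneg : Real.log (q x / p x) = - Real.log (p x / q x) := by
        rw [← Real.log_inv]
        congr 1
        field_simp
      rw [hneg]
      have h2 : q x * (1 - p x / q x) ≤ q x * (- Real.log (p x / q x)) := by
        apply mul_le_mul_of_nonneg_left _ h.le
        linarith
      calc q x - p x = q x * (1 - p x / q x) := by field_simp
        _ ≤ _ := h2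
  calc (0:ℝ) = 1 - 1 := by ring
    _ ≤ ∑ x, q x - ∑ x, p x := by rw [hq1]; linarith
    _ = ∑ x, (q x - p x) := (Finset.sum_sub_distrib _ _).symm
    _ ≤ _ := Finset.sum_le_sum fun x _ => key x

end Stmt12Aux

namespace Stmt12Aux

lemma mi_le_kl {α : Type*} [Fintype α] (Q P : α × α → ℝ)
    (hQ0 : ∀ z, 0 ≤ Q z) (hQ1 : ∑ z, Q z = 1)
    (hP0 : ∀ z, 0 ≤ P z) (hP1 : ∑ z, P z = 1)
    (hprod : ∀ z : α × α, P z = (∑ y, P (z.1, y)) * (∑ x, P (x, z.2)))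
    (hpos : ∀ z, 0 < Q z → 0 < P z) :
    miP Q ≤ ∑ z, Q z * Real.log (Q z / P z) := by
  set QX : α → ℝ := fun x => ∑ y, Q (x, y) with hQX
  set QY : α → ℝ := fun y => ∑ x, Q (x, y) with hQY
  set PX : α → ℝ := fun x => ∑ y, P (x, y) with hPX
  set PY : α → ℝ := fun y => ∑ x, P (x, y) with hPY
  have hQX0 : ∀ x, 0 ≤ QX x := fun x => Finset.sum_nonneg fun y _ => hQ0 _
  have hQY0 : ∀ y, 0 ≤ QY y := fun y => Finset.sum_nonneg fun x _ => hQ0 _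
  have hPX0 : ∀ x, 0 ≤ PX x := fun x => Finset.sum_nonneg fun y _ => hP0 _
  have hPY0 : ∀ y, 0 ≤ PY y := fun y => Finset.sum_nonneg fun x _ => hP0 _
  have hQX1 : ∑ x, QX x = 1 := by rw [← hQ1, Fintype.sum_prod_type]
  have hQY1 : ∑ y, QY y = 1 := by rw [← hQ1, Fintype.sum_prod_type_right]
  have hPX1 : ∑ x, PX x = 1 := by rw [← hP1, Fintype.sum_prod_type]
  have hPY1 : ∑ y, PY y = 1 := by rw [← hP1, Fintype.sum_prod_type_right]
  have hposX : ∀ x, 0 < QX x → 0 < PX x := by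
    intro x hx
    obtain ⟨y, -, hy⟩ := Finset.exists_lt_of_sum_lt
      (show ∑ y : α, (0:ℝ) < ∑ y, Q (x, y) by simpa using hx)
    exact lt_of_lt_of_le (hpos _ hy)
      (Finset.single_le_sum (fun y _ => hP0 (x, y)) (Finset.mem_univ y))
  have hposY : ∀ y, 0 < QY y → 0 < PY y := by
    intro y hy
    obtain ⟨x, -, hx⟩ := Finset.exists_lt_of_sum_lt
      (show ∑ x : α, (0:ℝ) < ∑ x, Q (x, y) by simpa using hy)
    exact lt_of_lt_of_le (hpos _ hx)
      (Finset.single_le_sum (fun x _ => hP0 (x, y)) (Finset.mem_univ x))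
  have key : ∀ z : α × α, Q z * Real.log (Q z / P z) =
      Q z * Real.log (Q z / (QX z.1 * QY z.2)) +
        (Q z * Real.log (QX z.1 / PX z.1) + Q z * Real.log (QY z.2 / PY z.2)) := by
    intro z
    rcases eq_or_lt_of_le (hQ0 z) with hq | hq
    · rw [← hq]; ring
    · have hqx : 0 < QX z.1 := lt_of_lt_of_le (show (0:ℝ) < Q (z.1, z.2) by simpa using hq)
        (Finset.single_le_sum (fun y _ => hQ0 (z.1, y)) (Finset.mem_univ z.2))
      have hqy : 0 < QY z.2 := lt_of_lt_of_le (show (0:ℝ) < Q (z.1, z.2) by simpa using hq)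
        (Finset.single_le_sum (fun x _ => hQ0 (x, z.2)) (Finset.mem_univ z.1))
      have hp : 0 < P z := hpos z hq
      have hpprod : 0 < PX z.1 * PY z.2 := by rw [← hprod z]; exact hp
      have hpx : 0 < PX z.1 := by
        rcases mul_pos_iff.mp hpprod with ⟨h1, _⟩ | ⟨h1, _⟩
        · exact h1
        · linarith [hPX0 z.1]
      have hpy : 0 < PY z.2 := by
        rcases mul_pos_iff.mp hpprod with ⟨_, h2⟩ | ⟨_, h2⟩
        · exact h2
        · linarith [hPY0 z.2]
      rw [hprod z, Real.log_div hq.ne' (by positivity),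
        Real.log_mul hpx.ne' hpy.ne',
        Real.log_div hq.ne' (by positivity),
        Real.log_mul hqx.ne' hqy.ne',
        Real.log_div hqx.ne' hpx.ne', Real.log_div hqy.ne' hpy.ne']
      ring
  have hsplit : ∑ z, Q z * Real.log (Q z / P z) =
      miP Q + ((∑ x, QX x * Real.log (QX x / PX x)) + ∑ y, QY y * Real.log (QY y / PY y)) := by
    have h1 : ∑ z : α × α, Q z * Real.log (QX z.1 / PX z.1) =
        ∑ x, QX x * Real.log (QX x / PX x) := by
      rw [Fintype.sum_prod_type]
      exact Finset.sum_congr rfl fun x _ => by simp [← Finset.sum_mul]; exact Or.inl rfl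
    have h2 : ∑ z : α × α, Q z * Real.log (QY z.2 / PY z.2) =
        ∑ y, QY y * Real.log (QY y / PY y) := by
      rw [Fintype.sum_prod_type_right]
      exact Finset.sum_congr rfl fun y _ => by simp [← Finset.sum_mul]; exact Or.inl rfl
    have hmi : miP Q = ∑ z : α × α, Q z * Real.log (Q z / (QX z.1 * QY z.2)) := rfl
    rw [hmi, ← h1, ← h2, ← Finset.sum_add_distrib, ← Finset.sum_add_distrib]
    exact Finset.sum_congr rfl fun z _ => key z
  have hx := kl_nonneg hQX0 hPX0 hQX1 hPX1.le hposX
  have hy := kl_nonneg hQY0 hPY0 hQY1 hPY1.le hposY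
  linarith [hsplit]

end Stmt12Aux

namespace Stmt12Aux

variable {β : Type*} [Fintype β]

lemma prod_le_exp {N : ℕ} (hN : 0 < N) (P : β → ℝ) (hP0 : ∀ z, 0 ≤ P z) (s : Fin N → β) :
    ∏ j, P (s j) ≤
      Real.exp (-((N : ℝ) * ∑ z, emp N s z * Real.log (emp N s z / P z))) *
        ∏ j, emp N s (s j) := by
  by_cases hzero : ∃ z, 0 < (Finset.univ.filter fun j => s j = z).card ∧ P z = 0
  · obtain ⟨z, hc, hPz⟩ := hzero
    have hL : ∏ j, P (s j) = 0 := by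
      rw [prod_count s P]
      exact Finset.prod_eq_zero (Finset.mem_univ z)
        (by rw [hPz]; exact zero_pow hc.ne')
    rw [hL]
    have : (0:ℝ) ≤ ∏ j, emp N s (s j) := Finset.prod_nonneg fun j _ => emp_nonneg s (s j)
    positivity
  · push_neg at hzero
    have hpos : ∀ z, 0 < (Finset.univ.filter fun j => s j = z).card → 0 < P z := by
      intro z hc
      rcases (hP0 z).eq_or_lt with h | h
      · exact absurd h.symm (hzero z hc)
      · exact h
    have hexp : Real.exp (-((N : ℝ) * ∑ z, emp N s z * Real.log (emp N s z / P z))) =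
        ∏ z, Real.exp (-((N : ℝ) * (emp N s z * Real.log (emp N s z / P z)))) := by
      rw [← Real.exp_sum]
      congr 1
      rw [Finset.mul_sum, ← Finset.sum_neg_distrib]
    rw [hexp, prod_count s P, prod_count s (fun z => emp N s z), ← Finset.prod_mul_distrib]
    refine le_of_eq (Finset.prod_congr rfl fun z _ => ?_)
    rcases Nat.eq_zero_or_pos (Finset.univ.filter fun j => s j = z).card with hc | hc
    · have hq : emp N s z = 0 := by unfold emp; rw [hc]; simp
      rw [hc, hq]
      simp
    · have hPz : 0 < P z := hpos z hc
      have hq : 0 < emp N s z := by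
        unfold emp
        have : (0:ℝ) < (Finset.univ.filter fun j => s j = z).card := by exact_mod_cast hc
        positivity
      set c : ℕ := (Finset.univ.filter fun j => s j = z).card with hcdef
      have hNc : (N : ℝ) * emp N s z = c := by
        unfold emp
        field_simp
        rfl
      rw [← mul_assoc, hNc]
      have hlog : -((c:ℝ) * Real.log (emp N s z / P z)) = (c:ℝ) * Real.log (P z / emp N s z) := by
        rw [Real.log_div hq.ne' hPz.ne', Real.log_div hPz.ne' hq.ne']
        ring
      rw [hlog, Real.exp_nat_mul, Real.exp_log (by positivity), ← mul_pow,
        div_mul_cancel₀ _ hq.ne']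

lemma counting {N : ℕ} (hN : 0 < N) (S : Finset (Fin N → β)) :
    ∑ s ∈ S, ∏ j, emp N s (s j) ≤ ((N:ℝ) + 1) ^ Fintype.card β := by
  classical
  have hterm : ∀ s : Fin N → β, 0 ≤ ∏ j, emp N s (s j) :=
    fun s => Finset.prod_nonneg fun j _ => emp_nonneg s (s j)
  have h1 : ∑ s ∈ S, ∏ j, emp N s (s j) ≤ ∑ s : Fin N → β, ∏ j, emp N s (s j) :=
    Finset.sum_le_sum_of_subset_of_nonneg (Finset.subset_univ S) fun s _ _ => hterm s
  refine h1.trans ?_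
  set cntF : (Fin N → β) → (β → Fin (N + 1)) := fun s z =>
    ⟨(Finset.univ.filter fun j => s j = z).card,
      Nat.lt_succ_of_le ((Finset.card_filter_le _ _).trans (by simp))⟩ with hcntF
  rw [← Finset.sum_fiberwise Finset.univ cntF (fun s => ∏ j, emp N s (s j))]
  have hinner : ∀ c : β → Fin (N + 1),
      ∑ s ∈ Finset.univ.filter (fun s => cntF s = c), ∏ j, emp N s (s j) ≤ 1 := by
    intro c
    rcases Finset.eq_empty_or_nonempty (Finset.univ.filter (fun s => cntF s = c)) with he | hne
    · rw [he]; simp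
    · obtain ⟨s₀, hs₀⟩ := hne
      have hs₀c : cntF s₀ = c := (Finset.mem_filter.mp hs₀).2
      have hcsum : ∑ z, ((c z : ℕ) : ℝ) = N := by
        rw [← hs₀c]
        exact sum_cnt s₀
      have hempc : ∀ s ∈ Finset.univ.filter (fun s => cntF s = c),
          ∀ z, emp N s z = (c z : ℕ) / N := by
        intro s hs z
        have : cntF s = c := (Finset.mem_filter.mp hs).2
        unfold emp
        rw [← this]
      calc ∑ s ∈ Finset.univ.filter (fun s => cntF s = c), ∏ j, emp N s (s j)
          = ∑ s ∈ Finset.univ.filter (fun s => cntF s = c), ∏ j, ((c (s j) : ℕ) : ℝ) / N := by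
            refine Finset.sum_congr rfl fun s hs => Finset.prod_congr rfl fun j _ => ?_
            exact hempc s hs (s j)
        _ ≤ ∑ s : Fin N → β, ∏ j, ((c (s j) : ℕ) : ℝ) / N := by
            refine Finset.sum_le_sum_of_subset_of_nonneg (Finset.filter_subset _ _)
              fun s _ _ => Finset.prod_nonneg fun j _ => by positivity
        _ = ∏ j : Fin N, ∑ z : β, ((c z : ℕ) : ℝ) / N := by
            rw [← Finset.sum_prod_piFinset]
            rw [Fintype.piFinset_univ]
        _ = 1 := by
            rw [Finset.prod_congr rfl fun j _ => by
              rw [← Finset.sum_div, hcsum, div_self (by positivity : (N:ℝ) ≠ 0)]]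
            simp
  calc ∑ c : β → Fin (N + 1), ∑ s ∈ Finset.univ.filter (fun s => cntF s = c), ∏ j, emp N s (s j)
      ≤ ∑ _c : β → Fin (N + 1), (1:ℝ) := Finset.sum_le_sum fun c _ => hinner c
    _ = ((N:ℝ) + 1) ^ Fintype.card β := by
        have hcard : (Finset.univ : Finset (β → Fin (N+1))).card = (N+1) ^ Fintype.card β := by
          simp [Fintype.card_fun]
        rw [Finset.sum_const, nsmul_eq_mul, mul_one, hcard]
        push_cast
        ring

end Stmt12Aux

namespace Stmt12Aux

lemma numeric {k N : ℕ} (hk : 2 ≤ k) (hN : 2 ≤ N) {δ : ℝ} (hδ0 : 0 < δ) (hδ1 : δ < 1) :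
    (k:ℝ)^2 * Real.log ((N:ℝ) + 1) - Real.log δ ≤
      10 * (k:ℝ)^2 * Real.log N * Real.log ((k:ℝ) / δ) := by
  have hN2 : (2:ℝ) ≤ N := by exact_mod_cast hN
  have hk2 : (2:ℝ) ≤ k := by exact_mod_cast hk
  have hl2 : (0.6931471803:ℝ) < Real.log 2 := Real.log_two_gt_d9
  have hlogN : Real.log 2 ≤ Real.log N := Real.log_le_log (by norm_num) hN2
  have hkd : (2:ℝ) ≤ (k:ℝ) / δ := by
    rw [le_div_iff₀ hδ0]
    nlinarith
  have hlogkd : Real.log 2 ≤ Real.log ((k:ℝ) / δ) := Real.log_le_log (by norm_num) hkd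
  have hN1 : Real.log ((N:ℝ) + 1) ≤ 2 * Real.log N := by
    have h2 : (N:ℝ) + 1 ≤ (N:ℝ)^2 := by nlinarith
    calc Real.log ((N:ℝ) + 1) ≤ Real.log ((N:ℝ)^2) := Real.log_le_log (by positivity) h2
      _ = 2 * Real.log N := by
          rw [Real.log_pow]
          push_cast
          ring
  have hdk : -Real.log δ ≤ Real.log ((k:ℝ) / δ) := by
    rw [← Real.log_inv]
    refine Real.log_le_log (by positivity) ?_
    rw [div_eq_mul_inv]
    nlinarith [inv_pos.mpr hδ0]
  have hA : (1:ℝ) ≤ 2 * Real.log N := by nlinarith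
  have hB : (1:ℝ) ≤ 2 * Real.log ((k:ℝ) / δ) := by nlinarith
  have hK : (4:ℝ) ≤ (k:ℝ)^2 := by nlinarith
  have hApos : (0:ℝ) < Real.log N := by nlinarith
  have hBpos : (0:ℝ) < Real.log ((k:ℝ) / δ) := by nlinarith
  set a := Real.log N
  set b := Real.log ((k:ℝ) / δ)
  set K := (k:ℝ)^2 with hKdef
  have hK0 : (0:ℝ) ≤ K := by positivity
  have h1 : K * Real.log ((N:ℝ) + 1) ≤ 2 * K * a := by
    have := mul_le_mul_of_nonneg_left hN1 hK0
    linarith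
  have h2 : 2 * K * a ≤ 4 * K * a * b := by
    have p2 : (0:ℝ) ≤ (K * a) * (2 * b - 1) :=
      mul_nonneg (mul_nonneg hK0 hApos.le) (by linarith)
    linarith [p2]
  have hb1 : b ≤ 2 * a * b := by
    have p3 : (0:ℝ) ≤ b * (2 * a - 1) := mul_nonneg hBpos.le (by linarith)
    linarith [p3]
  have hb2 : 2 * a * b ≤ 2 * K * a * b := by
    have p4 : (0:ℝ) ≤ (a * b) * (K - 1) :=
      mul_nonneg (mul_nonneg hApos.le hBpos.le) (by linarith)
    linarith [p4]
  have hKab : (0:ℝ) ≤ K * a * b := mul_nonneg (mul_nonneg hK0 hApos.le) hBpos.le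
  have h3 : -Real.log δ ≤ 2 * K * a * b := by linarith
  have h4 : K * Real.log ((N:ℝ) + 1) - Real.log δ ≤ 6 * (K * a * b) := by linarith
  linarith [hKab]

end Stmt12Aux

namespace Stmt12Aux

lemma miP_emp_card_one {α : Type*} [Fintype α] (hα : Fintype.card α = 1) {N : ℕ} (hN : 0 < N)
    (s : Fin N → α × α) : miP (fun z => emp N s z) = 0 := by
  haveI : Subsingleton α := Fintype.card_le_one_iff_subsingleton.mp hα.le
  have hone : ∀ z : α × α, emp N s z = 1 := by
    intro z
    unfold emp
    have hz : ∀ j, s j = z := fun j => Subsingleton.elim _ _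
    simp [hz, hN.ne']
  have hcard1 : (∑ _y : α, (1:ℝ)) = 1 := by
    rw [Finset.sum_const, Finset.card_univ, hα]
    norm_num
  unfold miP
  simp only [hone, hcard1, one_mul, mul_one, div_one, Real.log_one]
  simp

end Stmt12Aux


/-- Soundness for mutual information (Corollary 4.8): if `P` is a product
distribution then the empirical mutual information is small whp. -/
theorem stmt12 :
    ∃ C₃ : ℝ, 0 < C₃ ∧
      ∀ (α : Type) [Fintype α], ∀ P : α × α → ℝ,
        (∀ z, 0 ≤ P z) → (∑ z, P z = 1) →
        (∀ z : α × α, P z = (∑ y, P (z.1, y)) * (∑ x, P (x, z.2))) →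
        ∀ (N : ℕ), 1 < N →
        ∀ δ : ℝ, δ ∈ Set.Ioo (0 : ℝ) 1 →
        1 - δ ≤
          prob (fun s : Fin N → α × α => ∏ j, P (s j))
            {s |
              miP (fun z => emp N s z) ≤
                C₃ * (Fintype.card α : ℝ) ^ 2 * (Real.log N / N) *
                  Real.log (Fintype.card α / δ)} := by
  classical
  refine ⟨10, by norm_num, ?_⟩
  intro α _ P hP0 hP1 hprod N hN δ hδ
  obtain ⟨hδ0, hδ1⟩ := hδ
  have hNpos : 0 < N := by omega
  have hNR : (0:ℝ) < N := by exact_mod_cast hNpos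
  set k := Fintype.card α with hk
  set t : ℝ := 10 * (k:ℝ)^2 * (Real.log N / N) * Real.log ((k:ℝ)/δ) with ht
  set G : Set (Fin N → α × α) := {s | miP (fun z => emp N s z) ≤ t} with hG
  -- total probability is 1
  have htot : ∑ s : Fin N → α × α, ∏ j, P (s j) = 1 := by
    rw [← Fintype.piFinset_univ, Finset.sum_prod_piFinset Finset.univ (fun _ a => P a)]
    simp [hP1]
  have hprob : prob (fun s : Fin N → α × α => ∏ j, P (s j)) G =
      ∑ s ∈ Finset.univ.filter (fun s => s ∈ G), ∏ j, P (s j) :=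
    (Finset.sum_filter _ _).symm
  have hsplit := Finset.sum_filter_add_sum_filter_not Finset.univ (fun s => s ∈ G)
    (fun s : Fin N → α × α => ∏ j, P (s j))
  rw [hprob]
  -- suffices: bad mass ≤ δ
  suffices hbad : ∑ s ∈ Finset.univ.filter (fun s => ¬ s ∈ G), ∏ j, P (s j) ≤ δ by
    rw [htot] at hsplit
    linarith
  -- nonnegativity of t
  have hlogN0 : 0 ≤ Real.log N := Real.log_nonneg (by exact_mod_cast hNpos)
  -- cases on k
  rcases Nat.eq_zero_or_pos k with hk0 | hkpos
  · exfalso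
    haveI : IsEmpty α := Fintype.card_eq_zero_iff.mp (by rw [← hk]; exact hk0)
    rw [Finset.univ_eq_empty, Finset.sum_empty] at hP1
    norm_num at hP1
  have hk1R : (1:ℝ) ≤ (k:ℝ) := by exact_mod_cast hkpos
  have hkd1 : (1:ℝ) ≤ (k:ℝ) / δ := by
    rw [le_div_iff₀ hδ0, one_mul]
    linarith
  have hlkd0 : 0 ≤ Real.log ((k:ℝ) / δ) := Real.log_nonneg hkd1
  have ht0 : 0 ≤ t := by
    rw [ht]
    positivity
  by_cases hk2 : 2 ≤ k
  case neg =>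
    have hcard1 : Fintype.card α = 1 := by
      rw [← hk]
      omega
    have hempty : Finset.univ.filter (fun s : Fin N → α × α => ¬ s ∈ G) = ∅ := by
      refine Finset.filter_false_of_mem fun s _ => not_not_intro ?_
      show miP (fun z => emp N s z) ≤ t
      rw [Stmt12Aux.miP_emp_card_one hcard1 hNpos s]
      exact ht0
    rw [hempty, Finset.sum_empty]
    exact hδ0.le
  case pos =>
    have hNt : (N:ℝ) * t = 10 * (k:ℝ)^2 * Real.log N * Real.log ((k:ℝ)/δ) := by
      rw [ht]
      field_simp
    -- pointwise bound on bad samples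
    have hpt : ∀ s ∈ Finset.univ.filter (fun s : Fin N → α × α => ¬ s ∈ G),
        ∏ j, P (s j) ≤ Real.exp (-((N:ℝ) * t)) * ∏ j, emp N s (s j) := by
      intro s hs
      have hsG : ¬ s ∈ G := (Finset.mem_filter.mp hs).2
      have hmi : t < miP (fun z => emp N s z) := by
        by_contra h
        exact hsG (by simpa [hG, Set.mem_setOf_eq] using not_lt.mp h)
      by_cases hz : ∀ z : α × α, 0 < emp N s z → 0 < P z
      · have hKL := Stmt12Aux.mi_le_kl (fun z => emp N s z) P
          (fun z => Stmt12Aux.emp_nonneg s z) (Stmt12Aux.sum_emp hNpos s) hP0 hP1 hprod hz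
        refine (Stmt12Aux.prod_le_exp hNpos P hP0 s).trans ?_
        have hee : Real.exp (-((N:ℝ) * ∑ z, emp N s z * Real.log (emp N s z / P z))) ≤
            Real.exp (-((N:ℝ) * t)) := by
          rw [Real.exp_le_exp]
          have : t ≤ ∑ z, emp N s z * Real.log (emp N s z / P z) := le_of_lt (hmi.trans_le hKL)
          nlinarith
        exact mul_le_mul_of_nonneg_right hee
          (Finset.prod_nonneg fun j _ => Stmt12Aux.emp_nonneg s (s j))
      · push_neg at hz
        obtain ⟨z, hqz, hPz⟩ := hz
        have hPz0 : P z = 0 := le_antisymm hPz (hP0 z)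
        obtain ⟨j, hjz⟩ : ∃ j, s j = z := by
          by_contra hc
          push_neg at hc
          have h0 : emp N s z = 0 := by
            unfold emp
            simp [hc]
          rw [h0] at hqz
          exact lt_irrefl 0 hqz
        have hL : ∏ j, P (s j) = 0 :=
          Finset.prod_eq_zero (Finset.mem_univ j) (by rw [hjz, hPz0])
        rw [hL]
        exact mul_nonneg (Real.exp_nonneg _)
          (Finset.prod_nonneg fun j _ => Stmt12Aux.emp_nonneg s (s j))
    calc ∑ s ∈ Finset.univ.filter (fun s : Fin N → α × α => ¬ s ∈ G), ∏ j, P (s j)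
        ≤ ∑ s ∈ Finset.univ.filter (fun s : Fin N → α × α => ¬ s ∈ G),
            Real.exp (-((N:ℝ) * t)) * ∏ j, emp N s (s j) := Finset.sum_le_sum hpt
      _ = Real.exp (-((N:ℝ) * t)) *
            ∑ s ∈ Finset.univ.filter (fun s : Fin N → α × α => ¬ s ∈ G),
              ∏ j, emp N s (s j) := by rw [Finset.mul_sum]
      _ ≤ Real.exp (-((N:ℝ) * t)) * ((N:ℝ) + 1) ^ Fintype.card (α × α) := by
          refine mul_le_mul_of_nonneg_left (Stmt12Aux.counting hNpos _) (Real.exp_nonneg _)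
      _ ≤ δ := by
          have hcardprod : Fintype.card (α × α) = k * k := by rw [Fintype.card_prod, hk]
          rw [hcardprod]
          have hpow : ((N:ℝ) + 1) ^ (k * k) =
              Real.exp (((k * k : ℕ) : ℝ) * Real.log ((N:ℝ) + 1)) := by
            rw [← Real.log_pow, Real.exp_log (by positivity)]
          rw [hpow, ← Real.exp_add]
          have hδexp : δ = Real.exp (Real.log δ) := (Real.exp_log hδ0).symm
          rw [hδexp]
          rw [Real.exp_le_exp]
          have hnum := Stmt12Aux.numeric hk2 hN hδ0 hδ1
          have hcast : ((k * k : ℕ) : ℝ) = (k:ℝ)^2 := by push_cast; ring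
          rw [hcast]
          linarith [hNt ▸ hnum]

end
end

section
/- There exists a universal constant C > 0 such that the following holds. Let Σ be a finite set, P a pmf on Σ, N ≥ 2, and δ ∈ (0,1). Draw N i.i.d. samples from P and let T_i be the number of samples equal to i; define the add-1 estimator Q by Q(i) := (T_i + 1)/(N + |Σ|) for each i ∈ Σ. Then with probability at least 1−δ, D(P‖Q) ≤ C·|Σ|·log(|Σ|/δ)·log(N)/N. -/
set_option maxHeartbeats 1000000

open scoped Classical

noncomputable section

namespace Stmt15Aux

theorem sum_prod_pow {α : Type} [Fintype α] (f : α → ℝ) :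
    ∀ N : ℕ, ∑ s : Fin N → α, ∏ j, f (s j) = (∑ x, f x) ^ N := by
  intro N
  induction N with
  | zero => simp
  | succ n ih =>
    rw [← (Fin.consEquiv (fun _ : Fin (n+1) => α)).sum_comp
        (fun s : Fin (n+1) → α => ∏ j, f (s j))]
    rw [Fintype.sum_prod_type]
    have h : ∀ (x : α) (s : Fin n → α),
        (∏ j : Fin (n+1), f ((Fin.consEquiv (fun _ => α)) (x, s) j))
          = f x * ∏ j : Fin n, f (s j) := by
      intro x s
      rw [Fin.prod_univ_succ]
      simp [Fin.consEquiv]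
    calc ∑ x : α, ∑ s : Fin n → α, ∏ j : Fin (n+1), f ((Fin.consEquiv (fun _ => α)) (x, s) j)
        = ∑ x : α, ∑ s : Fin n → α, f x * ∏ j : Fin n, f (s j) := by
          apply Finset.sum_congr rfl; intro x _; apply Finset.sum_congr rfl; intro s _; exact h x s
      _ = ∑ x : α, f x * ∑ s : Fin n → α, ∏ j : Fin n, f (s j) := by
          simp [Finset.mul_sum]
      _ = (∑ x, f x) ^ (n+1) := by
          rw [← Finset.sum_mul]; rw [ih]; ring

theorem mgf {α : Type} [Fintype α] (P : α → ℝ) (N : ℕ) (i : α) (w : ℝ) :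
    ∑ s : Fin N → α, (∏ j, P (s j)) *
        Real.exp (w * ((Finset.univ.filter (fun j => s j = i)).card : ℝ))
      = ((∑ x, P x) - P i + P i * Real.exp w) ^ N := by
  have key : ∀ s : Fin N → α,
      (∏ j, P (s j)) * Real.exp (w * ((Finset.univ.filter (fun j => s j = i)).card : ℝ))
        = ∏ j, (P (s j) * Real.exp (w * (if s j = i then (1:ℝ) else 0))) := by
    intro s
    rw [Finset.prod_mul_distrib]
    congr 1
    rw [← Real.exp_sum]
    congr 1
    rw [← Finset.mul_sum]
    congr 1
    exact (Finset.sum_boole _ _).symm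
  calc ∑ s : Fin N → α, (∏ j, P (s j)) * Real.exp (w * ((Finset.univ.filter (fun j => s j = i)).card : ℝ))
      = ∑ s : Fin N → α, ∏ j, (P (s j) * Real.exp (w * (if s j = i then (1:ℝ) else 0))) := by
        exact Finset.sum_congr rfl (fun s _ => key s)
    _ = (∑ x, P x * Real.exp (w * (if x = i then (1:ℝ) else 0))) ^ N :=
        sum_prod_pow (fun x => P x * Real.exp (w * (if x = i then (1:ℝ) else 0))) N
    _ = ((∑ x, P x) - P i + P i * Real.exp w) ^ N := by
        congr 1
        have : ∀ x : α, P x * Real.exp (w * (if x = i then (1:ℝ) else 0))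
            = P x + (if x = i then P i * Real.exp w - P i else 0) := by
          intro x
          by_cases hx : x = i
          · subst hx; simp
          · simp [hx]
        rw [Finset.sum_congr rfl (fun x _ => this x), Finset.sum_add_distrib,
          Finset.sum_ite_eq' Finset.univ i (fun _ => P i * Real.exp w - P i)]
        simp; ring

section ProbLemmas
variable {Ω : Type*} [Fintype Ω] {p : Ω → ℝ}

theorem prob_nonneg (hp : ∀ ω, 0 ≤ p ω) (E : Set Ω) : 0 ≤ prob p E := by
  apply Finset.sum_nonneg; intro ω _
  by_cases h : ω ∈ E <;> simp [h, hp ω]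

theorem prob_mono (hp : ∀ ω, 0 ≤ p ω) {E F : Set Ω} (h : E ⊆ F) : prob p E ≤ prob p F := by
  apply Finset.sum_le_sum; intro ω _
  by_cases hE : ω ∈ E
  · simp [hE, h hE]
  · by_cases hF : ω ∈ F <;> simp [hE, hF, hp ω]

theorem prob_union_le (hp : ∀ ω, 0 ≤ p ω) (A B : Set Ω) :
    prob p (A ∪ B) ≤ prob p A + prob p B := by
  rw [prob, prob, prob, ← Finset.sum_add_distrib]
  apply Finset.sum_le_sum; intro ω _
  by_cases hA : ω ∈ A <;> by_cases hB : ω ∈ B <;>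
    simp [hA, hB, Set.mem_union, hp ω] <;> linarith [hp ω]

theorem prob_add_compl (E : Set Ω) : prob p E + prob p Eᶜ = ∑ ω, p ω := by
  rw [prob, prob, ← Finset.sum_add_distrib]
  apply Finset.sum_congr rfl; intro ω _
  by_cases h : ω ∈ E <;> simp [h]

theorem prob_biUnion_le {ι : Type*} (hp : ∀ ω, 0 ≤ p ω) (t : Finset ι) (A : ι → Set Ω) :
    prob p (⋃ i ∈ t, A i) ≤ ∑ i ∈ t, prob p (A i) := by
  induction t using Finset.induction with
  | empty => simp [prob]
  | @insert a t ha ih =>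
    rw [Finset.set_biUnion_insert, Finset.sum_insert ha]
    exact le_trans (prob_union_le hp _ _) (by linarith)

theorem prob_forall_compl_le {ι : Type*} [Fintype ι] (hp : ∀ ω, 0 ≤ p ω) (Q : ι → Ω → Prop) :
    prob p {ω | ¬ ∀ i, Q i ω} ≤ ∑ i, prob p {ω | ¬ Q i ω} := by
  have : {ω | ¬ ∀ i, Q i ω} = ⋃ i ∈ (Finset.univ : Finset ι), {ω | ¬ Q i ω} := by
    ext ω; simp [not_forall]
  rw [this]
  exact prob_biUnion_le hp _ _

end ProbLemmas

section Chernoff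
variable {α : Type} [Fintype α] (P : α → ℝ) (N : ℕ) (i : α)

theorem chernoff_upper (hP0 : ∀ x, 0 ≤ P x) (hP1 : ∑ x, P x = 1)
    (m w : ℝ) (hw : 0 ≤ w) :
    prob (fun s : Fin N → α => ∏ j, P (s j))
      {s | m ≤ ((Finset.univ.filter (fun j => s j = i)).card : ℝ)}
      ≤ Real.exp ((N : ℝ) * P i * (Real.exp w - 1) - w * m) := by
  have hdens : ∀ s : Fin N → α, 0 ≤ ∏ j, P (s j) :=
    fun s => Finset.prod_nonneg (fun j _ => hP0 _)
  have step1 : prob (fun s : Fin N → α => ∏ j, P (s j))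
      {s | m ≤ ((Finset.univ.filter (fun j => s j = i)).card : ℝ)}
      ≤ ∑ s : Fin N → α, (∏ j, P (s j)) *
          (Real.exp (-(w*m)) * Real.exp (w * ((Finset.univ.filter (fun j => s j = i)).card : ℝ))) := by
    apply Finset.sum_le_sum; intro s _
    by_cases hs : m ≤ ((Finset.univ.filter (fun j => s j = i)).card : ℝ)
    · simp only [Set.mem_setOf_eq, hs, if_pos]
      rw [← Real.exp_add]
      nth_rewrite 1 [← mul_one ((∏ j, P (s j)))]
      apply mul_le_mul_of_nonneg_left _ (hdens s)
      rw [← Real.exp_zero]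
      apply Real.exp_le_exp.2
      nlinarith
    · simp only [Set.mem_setOf_eq, hs, if_neg, not_false_iff]
      exact mul_nonneg (hdens s) (by positivity)
  have step2 : ∑ s : Fin N → α, (∏ j, P (s j)) *
      (Real.exp (-(w*m)) * Real.exp (w * ((Finset.univ.filter (fun j => s j = i)).card : ℝ)))
      = Real.exp (-(w*m)) * (1 - P i + P i * Real.exp w) ^ N := by
    have := mgf P N i w
    rw [hP1] at this
    rw [← this, Finset.mul_sum]
    apply Finset.sum_congr rfl; intro s _; ring
  refine le_trans step1 ?_
  rw [step2]
  have base_nonneg : (0:ℝ) ≤ 1 - P i + P i * Real.exp w := by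
    nlinarith [hP0 i, Real.exp_pos w, Real.exp_le_exp.2 hw, Real.exp_zero]
  have base_le : 1 - P i + P i * Real.exp w ≤ Real.exp (P i * (Real.exp w - 1)) := by
    have := Real.add_one_le_exp (P i * (Real.exp w - 1))
    linarith
  calc Real.exp (-(w*m)) * (1 - P i + P i * Real.exp w) ^ N
      ≤ Real.exp (-(w*m)) * (Real.exp (P i * (Real.exp w - 1))) ^ N := by
        apply mul_le_mul_of_nonneg_left _ (le_of_lt (Real.exp_pos _))
        exact pow_le_pow_left₀ base_nonneg base_le N
    _ = Real.exp ((N : ℝ) * P i * (Real.exp w - 1) - w * m) := by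
        rw [← Real.exp_nat_mul, ← Real.exp_add]
        congr 1; ring

theorem chernoff_lower (hP0 : ∀ x, 0 ≤ P x) (hP1 : ∑ x, P x = 1)
    (m w : ℝ) (hw : 0 ≤ w) :
    prob (fun s : Fin N → α => ∏ j, P (s j))
      {s | ((Finset.univ.filter (fun j => s j = i)).card : ℝ) ≤ m}
      ≤ Real.exp (w * m - (N : ℝ) * P i * (1 - Real.exp (-w))) := by
  have hdens : ∀ s : Fin N → α, 0 ≤ ∏ j, P (s j) :=
    fun s => Finset.prod_nonneg (fun j _ => hP0 _)
  have hPi1 : P i ≤ 1 := by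
    rw [← hP1]
    exact Finset.single_le_sum (fun x _ => hP0 x) (Finset.mem_univ i)
  have step1 : prob (fun s : Fin N → α => ∏ j, P (s j))
      {s | ((Finset.univ.filter (fun j => s j = i)).card : ℝ) ≤ m}
      ≤ ∑ s : Fin N → α, (∏ j, P (s j)) *
          (Real.exp (w*m) * Real.exp ((-w) * ((Finset.univ.filter (fun j => s j = i)).card : ℝ))) := by
    apply Finset.sum_le_sum; intro s _
    by_cases hs : ((Finset.univ.filter (fun j => s j = i)).card : ℝ) ≤ m
    · simp only [Set.mem_setOf_eq, hs, if_pos]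
      rw [← Real.exp_add]
      nth_rewrite 1 [← mul_one ((∏ j, P (s j)))]
      apply mul_le_mul_of_nonneg_left _ (hdens s)
      rw [← Real.exp_zero]
      apply Real.exp_le_exp.2
      nlinarith
    · simp only [Set.mem_setOf_eq, hs, if_neg, not_false_iff]
      exact mul_nonneg (hdens s) (by positivity)
  have step2 : ∑ s : Fin N → α, (∏ j, P (s j)) *
      (Real.exp (w*m) * Real.exp ((-w) * ((Finset.univ.filter (fun j => s j = i)).card : ℝ)))
      = Real.exp (w*m) * (1 - P i + P i * Real.exp (-w)) ^ N := by
    have := mgf P N i (-w)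
    rw [hP1] at this
    rw [← this, Finset.mul_sum]
    apply Finset.sum_congr rfl; intro s _; ring
  refine le_trans step1 ?_
  rw [step2]
  have hexpw : Real.exp (-w) ≤ 1 := by
    rw [← Real.exp_zero]; exact Real.exp_le_exp.2 (by linarith)
  have base_nonneg : (0:ℝ) ≤ 1 - P i + P i * Real.exp (-w) := by
    nlinarith [hP0 i, Real.exp_pos (-w)]
  have base_le : 1 - P i + P i * Real.exp (-w) ≤ Real.exp (P i * (Real.exp (-w) - 1)) := by
    have := Real.add_one_le_exp (P i * (Real.exp (-w) - 1))
    linarith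
  calc Real.exp (w*m) * (1 - P i + P i * Real.exp (-w)) ^ N
      ≤ Real.exp (w*m) * (Real.exp (P i * (Real.exp (-w) - 1))) ^ N := by
        apply mul_le_mul_of_nonneg_left _ (le_of_lt (Real.exp_pos _))
        exact pow_le_pow_left₀ base_nonneg base_le N
    _ = Real.exp (w * m - (N : ℝ) * P i * (1 - Real.exp (-w))) := by
        rw [← Real.exp_nat_mul, ← Real.exp_add]
        congr 1; ring

end Chernoff

theorem exp_quad {x : ℝ} (hx : |x| ≤ 1) : Real.exp x ≤ 1 + x + (3/4) * x^2 := by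
  have h := Real.exp_bound hx (n := 2) (by norm_num)
  have hsum : ∑ m ∈ Finset.range 2, x ^ m / (Nat.factorial m : ℝ) = 1 + x := by
    simp [Finset.sum_range_succ, Nat.factorial]
  rw [hsum] at h
  have h2 : |x| ^ 2 * ((Nat.succ 2 : ℝ) / ((Nat.factorial 2 : ℝ) * (2:ℕ))) = (3/4) * x^2 := by
    rw [sq_abs]; norm_num [Nat.factorial]; ring
  have h3 := (abs_le.1 h).2
  rw [h2] at h3
  linarith

theorem exp_chain_lower (ν d : ℝ) (hν : 0 < ν) (hd : 0 ≤ d) (hdν : d ≤ ν) :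
    (d/ν) * (ν - d) - ν * (1 - Real.exp (-(d/ν))) ≤ -(d^2/(4*ν)) := by
  have hw0 : 0 ≤ d/ν := div_nonneg hd hν.le
  have hw1 : d/ν ≤ 1 := (div_le_one hν).2 hdν
  have habs : |(-(d/ν))| ≤ 1 := by rw [abs_neg, abs_of_nonneg hw0]; exact hw1
  have hexp : Real.exp (-(d/ν)) ≤ 1 + (-(d/ν)) + (3/4) * (d/ν)^2 := by
    have := exp_quad habs; simpa using this
  have key : (d/ν)*(ν - d) - ν*((d/ν) - (3/4)*(d/ν)^2) = -(d^2/(4*ν)) := by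
    field_simp; ring
  nlinarith [hexp, hν]

theorem exp_chain_upper_gauss (ν d : ℝ) (hν : 0 < ν) (hd : 0 ≤ d) (h2 : d ≤ 2*ν) :
    ν * (Real.exp (d/(2*ν)) - 1) - (d/(2*ν)) * (ν + d) ≤ -(d^2/(4*ν)) := by
  have h2ν : 0 < 2*ν := by linarith
  have hw0 : 0 ≤ d/(2*ν) := div_nonneg hd h2ν.le
  have hw1 : d/(2*ν) ≤ 1 := (div_le_one h2ν).2 (by linarith)
  have hexp : Real.exp (d/(2*ν)) ≤ 1 + (d/(2*ν)) + (3/4) * (d/(2*ν))^2 :=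
    exp_quad (by rw [abs_of_nonneg hw0]; exact hw1)
  have key : ν * ((d/(2*ν)) + (3/4)*(d/(2*ν))^2) - (d/(2*ν)) * (ν + d) + (5/16) * (d^2/ν) = 0 := by
    field_simp; ring
  have h3 : ν * Real.exp (d/(2*ν)) ≤ ν * (1 + (d/(2*ν)) + (3/4) * (d/(2*ν))^2) :=
    mul_le_mul_of_nonneg_left hexp hν.le
  have h4 : 0 ≤ d^2/ν := div_nonneg (sq_nonneg d) hν.le
  have h5 : d^2/(4*ν) = (1/4) * (d^2/ν) := by ring
  rw [h5]
  nlinarith [h3, key, h4]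

theorem exp_chain_upper_poisson (ν d : ℝ) (hν : 0 ≤ ν) (hd : 2*ν ≤ d) :
    ν * (Real.exp 1 - 1) - 1 * (ν + d) ≤ -(d/2) := by
  have he : Real.exp 1 < 2.7182818286 := Real.exp_one_lt_d9
  nlinarith [hν, hd, he]

theorem one_sub_inv_le_log {x : ℝ} (hx : 0 < x) : 1 - 1/x ≤ Real.log x := by
  have h := Real.log_le_sub_one_of_pos (show (0:ℝ) < 1/x by positivity)
  rw [Real.log_div one_ne_zero (ne_of_gt hx)] at h
  simp only [Real.log_one, one_div] at h ⊢
  linarith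

/-- The per-symbol good event. -/
def GoodEv {α : Type} [Fintype α] (P : α → ℝ) (N : ℕ) (δ : ℝ) (i : α) (s : Fin N → α) : Prop :=
  if P i ≤ 16 * Real.log ((Fintype.card α : ℝ)/δ) / (N:ℝ) then
    ((Finset.univ.filter (fun j => s j = i)).card : ℝ) ≤ 64 * Real.log ((Fintype.card α : ℝ)/δ)
  else
    ((N:ℝ) * P i - Real.sqrt (4*((N:ℝ)*P i)*(Real.log ((Fintype.card α : ℝ)/δ) + Real.log 2))
        < ((Finset.univ.filter (fun j => s j = i)).card : ℝ))
    ∧ (((Finset.univ.filter (fun j => s j = i)).card : ℝ)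
        < (N:ℝ)*P i + (Real.sqrt (4*((N:ℝ)*P i)*(Real.log ((Fintype.card α : ℝ)/δ) + Real.log 2))
            + 2*(Real.log ((Fintype.card α : ℝ)/δ) + Real.log 2)))

theorem bad_prob {α : Type} [Fintype α] (P : α → ℝ) (hP0 : ∀ x, 0 ≤ P x) (hP1 : ∑ x, P x = 1)
    (N : ℕ) (hN : 2 ≤ N) (δ : ℝ) (hδ : δ ∈ Set.Ioo (0:ℝ) 1) (hk : 2 ≤ Fintype.card α) (i : α) :
    prob (fun s : Fin N → α => ∏ j, P (s j)) {s | ¬ GoodEv P N δ i s}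
      ≤ δ / (Fintype.card α : ℝ) := by
  obtain ⟨hδ0, hδ1⟩ := hδ
  have hdens : ∀ s : Fin N → α, 0 ≤ ∏ j, P (s j) :=
    fun s => Finset.prod_nonneg (fun j _ => hP0 _)
  have hK2 : (2:ℝ) ≤ (Fintype.card α : ℝ) := by exact_mod_cast hk
  have hKpos : (0:ℝ) < (Fintype.card α : ℝ) := by linarith
  have hKδ2 : (2:ℝ) ≤ (Fintype.card α : ℝ)/δ := by
    rw [le_div_iff₀ hδ0]; nlinarith
  set K : ℝ := (Fintype.card α : ℝ) with hKdef
  set L : ℝ := Real.log (K/δ) with hLdef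
  set n : ℝ := (N:ℝ) with hndef
  have hlog2 : (0.6931471803:ℝ) < Real.log 2 := Real.log_two_gt_d9
  have hL : Real.log 2 ≤ L := Real.log_le_log (by norm_num) hKδ2
  have hL0 : (0:ℝ) < L := by linarith
  set L2 : ℝ := L + Real.log 2 with hL2def
  have hL2a : L2 ≤ 2*L := by simp only [hL2def]; linarith
  have hL2b : (1:ℝ) ≤ L2 := by simp only [hL2def]; linarith
  have hn2 : (2:ℝ) ≤ n := by rw [hndef]; exact_mod_cast hN
  have hn0 : (0:ℝ) < n := by linarith
  have hexpL : Real.exp (-L) = δ / K := by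
    rw [Real.exp_neg, hLdef, Real.exp_log (by positivity)]
    rw [inv_div]
  have hexpL2 : Real.exp (-L2) = δ / K / 2 := by
    have : -L2 = (-L) + (-Real.log 2) := by simp only [hL2def]; ring
    rw [this, Real.exp_add, hexpL, Real.exp_neg, Real.exp_log (by norm_num)]
    ring
  have he1 : Real.exp 1 < 2.7182818286 := Real.exp_one_lt_d9
  have he1' : (2:ℝ) ≤ Real.exp 1 := by
    have := Real.add_one_le_exp 1; linarith
  by_cases hi : P i ≤ 16 * L / n
  · -- small symbol
    have hsub : {s : Fin N → α | ¬ GoodEv P N δ i s}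
        ⊆ {s : Fin N → α | 64*L ≤ ((Finset.univ.filter (fun j => s j = i)).card : ℝ)} := by
      intro s hs
      simp only [Set.mem_setOf_eq] at hs ⊢
      rw [GoodEv, if_pos hi] at hs
      exact (not_le.1 hs).le
    refine le_trans (prob_mono hdens hsub) ?_
    refine le_trans (chernoff_upper P N i hP0 hP1 (64*L) 1 zero_le_one) ?_
    rw [← hexpL]
    apply Real.exp_le_exp.2
    have hν16 : n * P i ≤ 16*L := by
      have h1 := mul_le_mul_of_nonneg_left hi hn0.le
      have h2 : n * (16*L/n) = 16*L := by field_simp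
      linarith
    have hν0 : 0 ≤ n * P i := mul_nonneg hn0.le (hP0 i)
    have h1 : n * P i * (Real.exp 1 - 1) ≤ 16*L*2 := by
      apply mul_le_mul hν16 (by linarith) (by linarith) (by linarith)
    linarith
  · -- large symbol
    have hp0 : 0 < P i := by
      have h0 : 0 < 16*L/n := div_pos (by linarith) hn0
      linarith [not_le.1 hi]
    have hνpos : 0 < n * P i := by positivity
    have hν16 : 16*L ≤ n * P i := by
      have := not_le.1 hi
      rw [div_lt_iff₀ hn0] at this
      linarith
    have hν8 : 8*L2 ≤ n * P i := by linarith
    set d1 : ℝ := Real.sqrt (4*(n*P i)*L2) with hd1def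
    have hd1_0 : 0 ≤ d1 := Real.sqrt_nonneg _
    have hd1sq : d1^2 = 4*(n*P i)*L2 := Real.sq_sqrt (by positivity)
    have hd1ν : d1 ≤ n * P i := by
      have h1 : 4*(n*P i)*L2 ≤ (n*P i)^2 := by nlinarith
      calc d1 ≤ Real.sqrt ((n*P i)^2) := Real.sqrt_le_sqrt h1
        _ = n * P i := Real.sqrt_sq hνpos.le
    set d2 : ℝ := d1 + 2*L2 with hd2def
    have hd2_0 : 0 ≤ d2 := by simp only [hd2def]; linarith
    have hsub : {s : Fin N → α | ¬ GoodEv P N δ i s}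
        ⊆ {s : Fin N → α | ((Finset.univ.filter (fun j => s j = i)).card : ℝ) ≤ n*P i - d1}
          ∪ {s : Fin N → α | n*P i + d2 ≤ ((Finset.univ.filter (fun j => s j = i)).card : ℝ)} := by
      intro s hs
      simp only [Set.mem_setOf_eq] at hs
      rw [GoodEv, if_neg hi] at hs
      rcases not_and_or.1 hs with h | h
      · left; exact not_lt.1 h
      · right; exact not_lt.1 h
    refine le_trans (prob_mono hdens hsub) ?_
    refine le_trans (prob_union_le hdens _ _) ?_
    have hlow : prob (fun s : Fin N → α => ∏ j, P (s j))
        {s : Fin N → α | ((Finset.univ.filter (fun j => s j = i)).card : ℝ) ≤ n*P i - d1}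
        ≤ δ / K / 2 := by
      refine le_trans (chernoff_lower P N i hP0 hP1 (n*P i - d1) (d1/(n*P i))
        (div_nonneg hd1_0 hνpos.le)) ?_
      rw [← hexpL2]
      apply Real.exp_le_exp.2
      have := exp_chain_lower (n*P i) d1 hνpos hd1_0 hd1ν
      have heq : d1^2/(4*(n*P i)) = L2 := by
        rw [hd1sq]; field_simp
      rw [heq] at this
      linarith [this]
    have hup : prob (fun s : Fin N → α => ∏ j, P (s j))
        {s : Fin N → α | n*P i + d2 ≤ ((Finset.univ.filter (fun j => s j = i)).card : ℝ)}
        ≤ δ / K / 2 := by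
      by_cases hcase : d2 ≤ 2*(n*P i)
      · refine le_trans (chernoff_upper P N i hP0 hP1 (n*P i + d2) (d2/(2*(n*P i)))
          (div_nonneg hd2_0 (by linarith))) ?_
        rw [← hexpL2]
        apply Real.exp_le_exp.2
        have hchain := exp_chain_upper_gauss (n*P i) d2 hνpos hd2_0 hcase
        have hd2sq : 4*(n*P i)*L2 ≤ d2^2 := by
          rw [← hd1sq]; nlinarith
        have hL2eq : (4*(n*P i)*L2)/(4*(n*P i)) = L2 := by field_simp
        have : L2 ≤ d2^2/(4*(n*P i)) := by
          rw [← hL2eq]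
          exact div_le_div_of_nonneg_right hd2sq (by positivity) |>.trans_eq rfl
        linarith [hchain]
      · refine le_trans (chernoff_upper P N i hP0 hP1 (n*P i + d2) 1 zero_le_one) ?_
        rw [← hexpL2]
        apply Real.exp_le_exp.2
        have hchain := exp_chain_upper_poisson (n*P i) d2 hνpos.le (le_of_lt (not_le.1 hcase))
        have : L2 ≤ d2/2 := by simp only [hd2def]; linarith
        linarith [hchain]
    have := add_le_add hlow hup
    linarith

theorem arith_d134 (ν L2 : ℝ) (h8 : 8*L2 ≤ ν) (hν0 : 0 < ν) :
    4*ν*L2 ≤ ((3/4)*ν)^2 := by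
  nlinarith [mul_le_mul_of_nonneg_left h8 hν0.le]

theorem arith_step (y n ν T1 : ℝ) (h : ν ≤ 4*T1) (hn : 0 ≤ n) :
    y^2*(n*ν) ≤ 4*y^2*(n*T1) := by
  nlinarith [mul_nonneg (mul_nonneg (sq_nonneg y) hn) (sub_nonneg.2 h)]

theorem arith_main (ν L L2 lg y d1 : ℝ)
    (hν8 : 8*L2 ≤ ν) (hL2b : 1 ≤ L2) (hL2a : L2 ≤ 2*L) (hL0 : 0 < L) (hν0 : 0 < ν)
    (hlg : (0.6:ℝ) ≤ lg)
    (hd1_0 : 0 ≤ d1) (hd1sq : d1^2 = 4*ν*L2)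
    (hysq : y^2 ≤ d1^2 + (d1 + 2*L2 + 1)^2) :
    4*y^2 ≤ 250*L*lg*ν := by
  have hd2e : (d1 + 2*L2 + 1)^2 ≤ 3*d1^2 + 12*L2^2 + 3 := by
    nlinarith [sq_nonneg (d1 - 2*L2), sq_nonneg (d1 - 1), sq_nonneg (2*L2 - 1)]
  have hy4 : y^2 ≤ 16*ν*L2 + 12*L2^2 + 3 := by linarith [hysq, hd2e, hd1sq]
  have hA : 48*L2^2 ≤ 6*ν*L2 := by
    nlinarith [mul_le_mul_of_nonneg_left hν8 (show (0:ℝ) ≤ 6*L2 by linarith)]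
  have hB : (12:ℝ) ≤ (3/2)*ν*L2 := by
    nlinarith [mul_le_mul_of_nonneg_left hν8 (show (0:ℝ) ≤ (3/16)*L2 by linarith), hL2b,
      sq_nonneg (L2 - 1)]
  have hC : ν*L2 ≤ 2*ν*L := by
    nlinarith [mul_le_mul_of_nonneg_left hL2a hν0.le]
  have h69 : (143:ℝ) ≤ 250*lg := by linarith
  have hD : 143*(ν*L) ≤ (250*lg)*(ν*L) := by
    nlinarith [mul_le_mul_of_nonneg_right h69 (mul_nonneg hν0.le hL0.le)]
  nlinarith [hy4, hA, hB, hC, hD]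

theorem arith_S1 (K L lg n : ℝ) (hnK : n ≤ K) (hL0 : 0 < L) (hlg : (0.6:ℝ) ≤ lg) (hn0 : 0 < n) :
    2*L ≤ 33*(K*L*lg/n) := by
  have he : 33*(K*L*lg/n) = (33*(K*L*lg))/n := by ring
  rw [he, le_div_iff₀ hn0]
  nlinarith [mul_le_mul_of_nonneg_right hnK (mul_nonneg hL0.le (by linarith : (0:ℝ) ≤ lg)),
    mul_le_mul_of_nonneg_left hlg (mul_nonneg hn0.le hL0.le),
    mul_nonneg hn0.le hL0.le]

theorem det_bound {α : Type} [Fintype α] (P : α → ℝ) (hP0 : ∀ x, 0 ≤ P x) (hP1 : ∑ x, P x = 1)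
    (N : ℕ) (hN : 2 ≤ N) (δ : ℝ) (hδ : δ ∈ Set.Ioo (0:ℝ) 1) (hk : 2 ≤ Fintype.card α)
    (s : Fin N → α) (hs : ∀ i, GoodEv P N δ i s) :
    KL P (fun i =>
        (((Finset.univ.filter (fun j => s j = i)).card : ℝ) + 1) /
          ((N : ℝ) + Fintype.card α)) ≤
      1000 * (Fintype.card α : ℝ) * Real.log (Fintype.card α / δ) * Real.log N / N := by
  obtain ⟨hδ0, hδ1⟩ := hδ
  have hK2 : (2:ℝ) ≤ (Fintype.card α : ℝ) := by exact_mod_cast hk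
  have hKpos : (0:ℝ) < (Fintype.card α : ℝ) := by linarith
  have hKδ2 : (2:ℝ) ≤ (Fintype.card α : ℝ)/δ := by
    rw [le_div_iff₀ hδ0]; nlinarith
  set K : ℝ := (Fintype.card α : ℝ) with hKdef
  set L : ℝ := Real.log (K/δ) with hLdef
  set n : ℝ := (N:ℝ) with hndef
  have hlog2 : (0.6931471803:ℝ) < Real.log 2 := Real.log_two_gt_d9
  have hL : Real.log 2 ≤ L := Real.log_le_log (by norm_num) hKδ2
  have hL0 : (0:ℝ) < L := by linarith
  have hlogK : Real.log K ≤ L := by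
    rw [hLdef]
    apply Real.log_le_log (by linarith)
    rw [le_div_iff₀ hδ0]; nlinarith
  set L2 : ℝ := L + Real.log 2 with hL2def
  have hL2a : L2 ≤ 2*L := by rw [hL2def]; linarith
  have hL2b : (1:ℝ) ≤ L2 := by rw [hL2def]; linarith
  have hn2 : (2:ℝ) ≤ n := by rw [hndef]; exact_mod_cast hN
  have hn0 : (0:ℝ) < n := by linarith
  have hlogn : Real.log 2 ≤ Real.log n := Real.log_le_log (by norm_num) hn2
  have hlogn0 : (0:ℝ) < Real.log n := by linarith
  have hPle1 : ∀ i, P i ≤ 1 := by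
    intro i
    rw [← hP1]
    exact Finset.single_le_sum (fun x _ => hP0 x) (Finset.mem_univ i)
  -- abbreviations
  set cnt : α → ℝ := fun i => ((Finset.univ.filter (fun j => s j = i)).card : ℝ) with hcntdef
  have hcnt0 : ∀ i, 0 ≤ cnt i := fun i => by rw [hcntdef]; positivity
  have hT1 : ∀ i, (1:ℝ) ≤ cnt i + 1 := fun i => by linarith [hcnt0 i]
  have hT1pos : ∀ i, (0:ℝ) < cnt i + 1 := fun i => by linarith [hcnt0 i]
  -- (a) counts sum to N
  have hcntsum : ∑ i, cnt i = n := by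
    rw [hcntdef, hndef]
    have : ∀ i : α, ((Finset.univ.filter (fun j => s j = i)).card : ℝ)
        = ∑ j : Fin N, (if s j = i then (1:ℝ) else 0) := by
      intro i; rw [Finset.sum_boole]
    rw [Finset.sum_congr rfl (fun i _ => this i), Finset.sum_comm]
    have hrow : ∀ j : Fin N, ∑ i : α, (if s j = i then (1:ℝ) else 0) = 1 := by
      intro j
      rw [Finset.sum_ite_eq Finset.univ (s j) (fun _ => (1:ℝ))]
      simp
    rw [Finset.sum_congr rfl (fun j _ => hrow j)]
    simp
  -- (b) rewrite KL
  have hKL : KL P (fun i => (cnt i + 1) / (n + K))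
      = ∑ i, P i * Real.log (P i * (n + K) / (cnt i + 1)) := by
    apply Finset.sum_congr rfl
    intro i _
    congr 1
    rw [div_div_eq_mul_div]
  -- (c) KL = sum of g
  have hsum_g : ∑ i, P i * Real.log (P i * (n + K) / (cnt i + 1))
      = ∑ i, (P i * Real.log (P i * (n + K) / (cnt i + 1)) + ((cnt i + 1)/n - P i * (1 + K/n))) := by
    rw [Finset.sum_add_distrib]
    have h1 : ∑ i, ((cnt i + 1)/n - P i * (1 + K/n)) = 0 := by
      rw [Finset.sum_sub_distrib]
      have h2 : ∑ i, (cnt i + 1)/n = (n + K)/n := by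
        rw [← Finset.sum_div]
        congr 1
        rw [Finset.sum_add_distrib, hcntsum, Finset.sum_const, Finset.card_univ]
        simp [hKdef]
      have h3 : ∑ i, P i * (1 + K/n) = 1 + K/n := by
        rw [← Finset.sum_mul, hP1, one_mul]
      rw [h2, h3]
      field_simp
      ring
    rw [h1, add_zero]
  -- (d) per-symbol bound
  have hper : ∀ i, P i * Real.log (P i * (n + K) / (cnt i + 1)) + ((cnt i + 1)/n - P i * (1 + K/n))
      ≤ (if P i ≤ 16*L/n then P i else 0) * Real.log (n + K) + 250*L*Real.log n/n := by
    intro i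
    have hgood := hs i
    rw [GoodEv] at hgood
    by_cases hi : P i ≤ 16*L/n
    · rw [if_pos hi] at hgood ⊢
      -- small case
      have hlogterm : P i * Real.log (P i * (n + K) / (cnt i + 1)) ≤ P i * Real.log (n + K) := by
        rcases eq_or_lt_of_le (hP0 i) with h0 | h0
        · rw [← h0]; simp
        · apply mul_le_mul_of_nonneg_left _ (hP0 i)
          apply Real.log_le_log (by positivity)
          calc P i * (n + K) / (cnt i + 1) ≤ P i * (n + K) :=
                div_le_self (by positivity) (hT1 i)
            _ ≤ n + K := by nlinarith [hPle1 i]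
      have hnum : cnt i + 1 ≤ 250*L*Real.log n := by
        have h64 : cnt i ≤ 64*L := hgood
        have hprod : 250*L*Real.log 2 ≤ 250*L*Real.log n :=
          mul_le_mul_of_nonneg_left hlogn (by linarith)
        nlinarith [hprod, hL0]
      have hcount : (cnt i + 1)/n ≤ 250*L*Real.log n/n := by gcongr
      have hdrop : - (P i * (1 + K/n)) ≤ 0 := by
        have hKn : 0 ≤ K/n := div_nonneg hKpos.le hn0.le
        have : 0 ≤ P i * (1 + K/n) := mul_nonneg (hP0 i) (by linarith)
        linarith
      linarith [hlogterm, hcount, hdrop]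
    · rw [if_neg hi] at hgood ⊢
      obtain ⟨hlow, hup⟩ := hgood
      have hp0 : 0 < P i := by
        have h0 : 0 < 16*L/n := div_pos (by linarith) hn0
        linarith [not_le.1 hi]
      have hνpos : 0 < n * P i := mul_pos hn0 hp0
      have hν16 : 16*L ≤ n * P i := by
        have h1 := not_le.1 hi
        rw [div_lt_iff₀ hn0] at h1
        linarith
      have hν8 : 8*L2 ≤ n * P i := by linarith
      set d1 : ℝ := Real.sqrt (4*(n*P i)*L2) with hd1def
      have hd1_0 : 0 ≤ d1 := Real.sqrt_nonneg _
      have hd1sq : d1^2 = 4*(n*P i)*L2 := Real.sq_sqrt (by positivity)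
      have hd134 : d1 ≤ (3/4)*(n*P i) := by
        have h1 : 4*(n*P i)*L2 ≤ ((3/4)*(n*P i))^2 := arith_d134 (n*P i) L2 hν8 hνpos
        calc d1 ≤ Real.sqrt (((3/4)*(n*P i))^2) := Real.sqrt_le_sqrt h1
          _ = (3/4)*(n*P i) := Real.sqrt_sq (by linarith)
      set d2 : ℝ := d1 + 2*L2 with hd2def
      have hlow' : n*P i - d1 < cnt i := hlow
      have hup' : cnt i < n*P i + d2 := hup
      set y : ℝ := cnt i + 1 - n*P i with hydef
      have hy1 : -d1 < y := by rw [hydef]; linarith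
      have hy2 : y < d2 + 1 := by rw [hydef]; linarith
      have hysq : y^2 ≤ d1^2 + (d2+1)^2 := by
        rcases le_or_gt 0 y with h | h
        · have h1 : y^2 ≤ (d2+1)^2 := pow_le_pow_left₀ h hy2.le 2
          linarith [sq_nonneg d1]
        · have h0 : 0 ≤ -y := by linarith
          have h1 : (-y)^2 ≤ d1^2 := pow_le_pow_left₀ h0 (by linarith) 2
          have h2 : (-y)^2 = y^2 := by ring
          linarith [sq_nonneg (d2+1), h1, h2.symm.le]
      have hT1q : (n*P i)/4 < cnt i + 1 := by linarith
      have harg : P i * (n + K) / (cnt i + 1) = ((n*P i)/(cnt i + 1)) * ((n + K)/n) := by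
        field_simp
      have hlogsplit : Real.log (P i * (n + K)/(cnt i + 1))
          = Real.log ((n*P i)/(cnt i + 1)) + Real.log ((n + K)/n) := by
        rw [harg]
        exact Real.log_mul (ne_of_gt (div_pos hνpos (hT1pos i)))
          (ne_of_gt (div_pos (by linarith) hn0))
      have hlogA : Real.log ((n + K)/n) ≤ K/n := by
        have h := Real.log_le_sub_one_of_pos (show (0:ℝ) < (n+K)/n by positivity)
        have heq : (n+K)/n - 1 = K/n := by field_simp; ring
        linarith
      have hlogB : Real.log ((n*P i)/(cnt i + 1)) ≤ (n*P i)/(cnt i + 1) - 1 :=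
        Real.log_le_sub_one_of_pos (div_pos hνpos (hT1pos i))
      have hmul : P i * Real.log (P i * (n + K)/(cnt i + 1))
          ≤ P i * ((n*P i)/(cnt i + 1) - 1 + K/n) := by
        rw [hlogsplit]
        exact mul_le_mul_of_nonneg_left (by linarith) (hP0 i)
      have hident : P i * ((n*P i)/(cnt i + 1) - 1 + K/n) + ((cnt i + 1)/n - P i * (1 + K/n))
          = y^2/(n*(cnt i + 1)) := by
        rw [hydef]
        field_simp [(hT1pos i).ne']
        ring
      have hstep : y^2/(n*(cnt i + 1)) ≤ 4*y^2/(n*(n*P i)) := by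
        rw [div_le_div_iff₀ (by positivity) (by positivity)]
        exact arith_step y n (n*P i) (cnt i + 1) (by linarith) hn0.le
      have hnum : 4*y^2 ≤ 250*L*Real.log n*(n*P i) := by
        apply arith_main (n*P i) L L2 (Real.log n) y d1 hν8 hL2b hL2a hL0 hνpos
          (by linarith) hd1_0 hd1sq
        rw [hd2def] at hysq
        exact hysq
      have hfinal : 4*y^2/(n*(n*P i)) ≤ 250*L*Real.log n/n := by
        have he : 250*L*Real.log n/n = (250*L*Real.log n*(n*P i))/(n*(n*P i)) := by
          rw [mul_div_mul_right _ _ (ne_of_gt hνpos)]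
        rw [he]
        gcongr
      rw [zero_mul, zero_add]
      linarith [hmul, hident, hstep, hfinal]
  -- (e) summation
  rw [hKL, hsum_g]
  have hsum_le := Finset.sum_le_sum (s := (Finset.univ : Finset α)) (fun i _ => hper i)
  refine le_trans hsum_le ?_
  rw [Finset.sum_add_distrib, ← Finset.sum_mul, Finset.sum_const, Finset.card_univ,
    nsmul_eq_mul, ← hKdef]
  set Psm : ℝ := ∑ i, (if P i ≤ 16*L/n then P i else 0) with hPsmdef
  have hPsm0 : 0 ≤ Psm := by
    rw [hPsmdef]
    apply Finset.sum_nonneg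
    intro i _
    by_cases hi : P i ≤ 16*L/n <;> simp [hi, hP0 i]
  have hPsm1 : Psm ≤ 1 := by
    rw [hPsmdef, ← hP1]
    apply Finset.sum_le_sum
    intro i _
    by_cases hi : P i ≤ 16*L/n <;> simp [hi, hP0 i]
  have hPsm2 : Psm ≤ K * (16*L/n) := by
    rw [hPsmdef]
    have h16 : (0:ℝ) ≤ 16*L/n := by positivity
    calc ∑ i, (if P i ≤ 16*L/n then P i else 0) ≤ ∑ _i : α, 16*L/n := by
          apply Finset.sum_le_sum
          intro i _
          by_cases hi : P i ≤ 16*L/n <;> simp [hi, h16]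
      _ = K * (16*L/n) := by
          rw [Finset.sum_const, Finset.card_univ, nsmul_eq_mul, hKdef]
  have hlognK0 : (0:ℝ) ≤ Real.log (n + K) := Real.log_nonneg (by linarith)
  have hS1 : Psm * Real.log (n + K) ≤ 33*(K*L*Real.log n/n) := by
    rcases le_or_gt K n with hKn | hnK
    · have hlog2n : Real.log (n + K) ≤ 2*Real.log n := by
        have h1 : Real.log (n + K) ≤ Real.log (2*n) := Real.log_le_log (by linarith) (by linarith)
        rw [Real.log_mul (by norm_num) (ne_of_gt hn0)] at h1
        linarith
      have hX : 0 ≤ K*L*Real.log n/n :=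
        div_nonneg (mul_nonneg (mul_nonneg hKpos.le hL0.le) hlogn0.le) hn0.le
      have hKL16 : 0 ≤ K*(16*L/n) :=
        mul_nonneg hKpos.le (div_nonneg (by linarith) hn0.le)
      calc Psm * Real.log (n + K) ≤ (K*(16*L/n)) * (2*Real.log n) :=
            mul_le_mul hPsm2 hlog2n hlognK0 hKL16
        _ = 32*(K*L*Real.log n/n) := by ring
        _ ≤ 33*(K*L*Real.log n/n) := by linarith
    · have hlog2K : Real.log (n + K) ≤ 2*L := by
        have h1 : Real.log (n + K) ≤ Real.log (2*K) := Real.log_le_log (by linarith) (by linarith)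
        rw [Real.log_mul (by norm_num) (ne_of_gt hKpos)] at h1
        linarith [hlogK, hL]
      have h2L : Psm * Real.log (n + K) ≤ 1 * (2*L) :=
        mul_le_mul hPsm1 hlog2K hlognK0 (by norm_num)
      have := arith_S1 K L (Real.log n) n hnK.le hL0 (by linarith) hn0
      linarith
  have hX : 0 ≤ K*L*Real.log n/n :=
    div_nonneg (mul_nonneg (mul_nonneg hKpos.le hL0.le) hlogn0.le) hn0.le
  have hS2e : K*(250*L*Real.log n/n) = 250*(K*L*Real.log n/n) := by ring
  have hfin : 1000*K*L*Real.log n/n = 1000*(K*L*Real.log n/n) := by ring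
  linarith [hS1]

end Stmt15Aux

open Stmt15Aux in
/-- High-probability guarantee for the add-1 (Laplace) estimator
(Theorem 6.1): with probability `1 − δ`,
`D(P‖Q) ≤ C·|Σ|·log(|Σ|/δ)·log N / N`. -/
theorem stmt15 :
    ∃ C : ℝ, 0 < C ∧
      ∀ (α : Type) [Fintype α], ∀ P : α → ℝ,
        (∀ i, 0 ≤ P i) → (∑ i, P i = 1) →
        ∀ N : ℕ, 2 ≤ N →
        ∀ δ : ℝ, δ ∈ Set.Ioo (0 : ℝ) 1 →
        1 - δ ≤
          prob (fun s : Fin N → α => ∏ j, P (s j))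
            {s |
              KL P (fun i =>
                  (((Finset.univ.filter (fun j => s j = i)).card : ℝ) + 1) /
                    ((N : ℝ) + Fintype.card α)) ≤
                C * (Fintype.card α : ℝ) * Real.log (Fintype.card α / δ) *
                  Real.log N / N} := by
  refine ⟨1000, by norm_num, ?_⟩
  intro α _ P hP0 hP1 N hN δ hδ
  have hdens : ∀ s : Fin N → α, 0 ≤ ∏ j, P (s j) :=
    fun s => Finset.prod_nonneg (fun j _ => hP0 _)
  have htotal : ∑ s : Fin N → α, ∏ j, P (s j) = 1 := by
    rw [sum_prod_pow P N, hP1, one_pow]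
  -- trivial cases on cardinality
  rcases lt_or_ge (Fintype.card α) 2 with hklt | hk
  · -- card 0 or 1
    have h01 : Fintype.card α = 0 ∨ Fintype.card α = 1 := by omega
    rcases h01 with h | h
    · exfalso
      have : IsEmpty α := Fintype.card_eq_zero_iff.mp h
      rw [Finset.univ_eq_empty, Finset.sum_empty] at hP1
      norm_num at hP1
    · -- card = 1 : KL is 0, event is everything
      obtain ⟨i0, hi0⟩ := Fintype.card_eq_one_iff.mp h
      have hev : {s : Fin N → α |
          KL P (fun i =>
              (((Finset.univ.filter (fun j => s j = i)).card : ℝ) + 1) /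
                ((N : ℝ) + Fintype.card α)) ≤
            1000 * (Fintype.card α : ℝ) * Real.log (Fintype.card α / δ) *
              Real.log N / N} = Set.univ := by
        apply Set.eq_univ_of_forall
        intro s
        have hKL0 : KL P (fun i =>
            (((Finset.univ.filter (fun j => s j = i)).card : ℝ) + 1) /
              ((N : ℝ) + Fintype.card α)) = 0 := by
          rw [KL]
          apply Finset.sum_eq_zero
          intro x _
          have hx : x = i0 := hi0 x
          have hfil : (Finset.univ.filter (fun j : Fin N => s j = x)) = Finset.univ := by
            apply Finset.filter_true_of_mem
            intro j _
            rw [hx]; exact hi0 (s j)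
          have hQ : (((Finset.univ.filter (fun j : Fin N => s j = x)).card : ℝ) + 1) /
              ((N : ℝ) + Fintype.card α) = 1 := by
            rw [hfil, Finset.card_univ, Fintype.card_fin, h]
            push_cast
            apply div_self
            have : (0:ℝ) < (N:ℝ) + 1 := by positivity
            linarith
          have hPx : P x = 1 := by
            have h1 : (1:ℝ) = ∑ y, P y := hP1.symm
            have h2 : ∑ y, P y = ∑ _y : α, P x := by
              apply Finset.sum_congr rfl
              intro y _
              rw [hi0 y, hx]
            rw [h2, Finset.sum_const, Finset.card_univ, h, one_smul] at h1
            exact h1.symm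
          rw [hQ, hPx]
          simp
        rw [Set.mem_setOf_eq, hKL0]
        have hδ1 : δ < 1 := hδ.2
        have hδ0 : 0 < δ := hδ.1
        have hlog1δ : 0 ≤ Real.log ((Fintype.card α : ℝ)/δ) := by
          apply Real.log_nonneg
          rw [h]
          push_cast
          rw [le_div_iff₀ hδ0]
          linarith
        have hlogN : 0 ≤ Real.log (N:ℝ) := Real.log_nonneg (by exact_mod_cast Nat.one_le_of_lt hN)
        have hN0 : (0:ℝ) ≤ (N:ℝ) := by positivity
        apply div_nonneg _ hN0
        apply mul_nonneg _ hlogN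
        apply mul_nonneg _ hlog1δ
        positivity
      rw [hev]
      have huniv : prob (fun s : Fin N → α => ∏ j, P (s j)) Set.univ = 1 := by
        rw [prob]
        simp only [Set.mem_univ, if_pos]
        exact htotal
      rw [huniv]
      linarith [hδ.1]

  · -- main case
    have hGsub : {s : Fin N → α | ∀ i, GoodEv P N δ i s} ⊆
        {s : Fin N → α |
          KL P (fun i =>
              (((Finset.univ.filter (fun j => s j = i)).card : ℝ) + 1) /
                ((N : ℝ) + Fintype.card α)) ≤
            1000 * (Fintype.card α : ℝ) * Real.log (Fintype.card α / δ) *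
              Real.log N / N} := by
      intro s hs
      exact det_bound P hP0 hP1 N hN δ hδ hk s hs
    refine le_trans ?_ (prob_mono hdens hGsub)
    have hcompl : ({s : Fin N → α | ∀ i, GoodEv P N δ i s})ᶜ
        = {s : Fin N → α | ¬ ∀ i, GoodEv P N δ i s} := by
      ext s; simp [Set.mem_compl_iff]
    have hsplit := prob_add_compl (p := fun s : Fin N → α => ∏ j, P (s j))
      {s : Fin N → α | ∀ i, GoodEv P N δ i s}
    rw [htotal, hcompl] at hsplit
    have hbad : prob (fun s : Fin N → α => ∏ j, P (s j))
        {s : Fin N → α | ¬ ∀ i, GoodEv P N δ i s} ≤ δ := by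
      refine le_trans (prob_forall_compl_le hdens (GoodEv P N δ)) ?_
      have : ∀ i : α, prob (fun s : Fin N → α => ∏ j, P (s j)) {s | ¬ GoodEv P N δ i s}
          ≤ δ / (Fintype.card α : ℝ) := fun i => bad_prob P hP0 hP1 N hN δ hδ hk i
      refine le_trans (Finset.sum_le_sum (fun i _ => this i)) ?_
      rw [Finset.sum_const, Finset.card_univ, nsmul_eq_mul]
      have hkpos : (0:ℝ) < (Fintype.card α : ℝ) := by positivity
      rw [mul_div_cancel₀ _ (ne_of_gt hkpos)]
    linarith

end
end
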